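/- arXiv:1805.10221 — 9 statements merged into one kernel-verified Lean document; each statement's English description precedes it below -/
import Mathlib

section
/- Let A be a nonempty closed spherically convex subset of the unit sphere S of a finite-dimensional real inner product space E. If rad A ≥ π/2 (i.e., for every a ∈ A, sup_{b ∈ A} arccos⟨a,b⟩ ≥ π/2; equivalently, for every a ∈ A there exists b ∈ A with ⟨a,b⟩ ≤ 0), then diam A = π; more precisely, there exists a ∈ A such that −a ∈ A. -/
open scoped RealInnerProductSpace

/-- A subset of the unit sphere is *spherically convex* (π-convex) if for all
non-antipodal points `x, y` in it, the normalized segment between them stays in it. -/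
def SphericallyConvex {E : Type*} [NormedAddCommGroup E] [InnerProductSpace ℝ E]
    (A : Set E) : Prop :=
  ∀ x ∈ A, ∀ y ∈ A, y ≠ -x → ∀ t : ℝ, 0 ≤ t → t ≤ 1 →
    (‖(1 - t) • x + t • y‖)⁻¹ • ((1 - t) • x + t • y) ∈ A

/-- Convex hull of a compact set in a finite-dimensional normed space is compact. -/
lemma isCompact_convexHull_aux {E : Type*} [NormedAddCommGroup E] [NormedSpace ℝ E]
    [FiniteDimensional ℝ E] {s : Set E} (hne : s.Nonempty) (hs : IsCompact s) :
    IsCompact (convexHull ℝ s) := by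
  obtain ⟨a₀, ha₀⟩ := hne
  set n := Module.finrank ℝ E + 1 with hn
  have hD : IsCompact ((stdSimplex ℝ (Fin n)) ×ˢ (Set.univ.pi fun _ : Fin n => s)) :=
    (isCompact_stdSimplex (𝕜 := ℝ) (ι := Fin n)).prod (isCompact_univ_pi fun _ => hs)
  have hcont : Continuous fun p : (Fin n → ℝ) × (Fin n → E) => ∑ i, p.1 i • p.2 i := by
    apply continuous_finset_sum
    intro i _
    exact ((continuous_apply i).comp continuous_fst).smul
      ((continuous_apply i).comp continuous_snd)
  have himg : (fun p : (Fin n → ℝ) × (Fin n → E) => ∑ i, p.1 i • p.2 i) ''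
      ((stdSimplex ℝ (Fin n)) ×ˢ (Set.univ.pi fun _ : Fin n => s)) = convexHull ℝ s := by
    apply Set.Subset.antisymm
    · rintro x ⟨⟨w, z⟩, ⟨hw, hz⟩, rfl⟩
      exact (convex_convexHull ℝ s).sum_mem (fun i _ => hw.1 i) hw.2
        (fun i _ => subset_convexHull ℝ s (hz i (Set.mem_univ i)))
    · intro x hx
      obtain ⟨ι, hι, z, w, hzs, hind, hwpos, hwsum, hx'⟩ :=
        eq_pos_convex_span_of_mem_convexHull hx
      letI := hι
      have hcard : Fintype.card ι ≤ n := by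
        refine le_trans hind.card_le_finrank_succ ?_
        exact Nat.add_le_add_right (Submodule.finrank_le _) 1
      obtain ⟨e⟩ : Nonempty (ι ↪ Fin n) :=
        Function.Embedding.nonempty_of_card_le (by simpa using hcard)
      set g : Fin n → ℝ := Function.extend e w 0 with hg
      set zf : Fin n → E := Function.extend e z (fun _ => a₀) with hzf
      have hgapp : ∀ i, g (e i) = w i := fun i => by
        rw [hg, e.injective.extend_apply]
      have hzapp : ∀ i, zf (e i) = z i := fun i => by
        rw [hzf, e.injective.extend_apply]
      have hg0 : ∀ j, j ∉ Finset.univ.image e → g j = 0 := by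
        intro j hj
        rw [hg, Function.extend_apply' _ _ _ (by simpa using hj)]
        rfl
      have hinj : ∀ i ∈ Finset.univ, ∀ i' ∈ Finset.univ, e i = e i' → i = i' :=
        fun i _ i' _ h => e.injective h
      have hg_sum : ∑ j, g j = 1 := by
        rw [← Finset.sum_subset (Finset.subset_univ (Finset.univ.image e))
          (fun j _ hj => hg0 j hj)]
        rw [Finset.sum_image hinj]
        rw [Finset.sum_congr rfl fun i _ => hgapp i]
        exact hwsum
      have hx_sum : ∑ j, g j • zf j = x := by
        rw [← Finset.sum_subset (Finset.subset_univ (Finset.univ.image e))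
          (fun j _ hj => by rw [hg0 j hj, zero_smul])]
        rw [Finset.sum_image hinj]
        rw [Finset.sum_congr rfl fun i _ => by rw [hgapp i, hzapp i]]
        exact hx'
      have hgnn : ∀ j, 0 ≤ g j := by
        intro j
        by_cases h : ∃ i, e i = j
        · obtain ⟨i, rfl⟩ := h
          rw [hgapp i]
          exact (hwpos i).le
        · rw [hg, Function.extend_apply' _ _ _ h]
          exact le_refl 0
      have hzfs : ∀ j, zf j ∈ s := by
        intro j
        by_cases h : ∃ i, e i = j
        · obtain ⟨i, rfl⟩ := h
          rw [hzapp i]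
          exact hzs (Set.mem_range_self i)
        · rw [hzf, Function.extend_apply' _ _ _ h]
          exact ha₀
      exact ⟨⟨g, zf⟩, ⟨⟨hgnn, hg_sum⟩, fun j _ => hzfs j⟩, hx_sum⟩
  rw [← himg]
  exact hD.image hcont

/-- A nonempty closed spherically convex subset of the unit sphere with radius `≥ π/2`
has diameter `π`; more precisely, it contains a pair of antipodal points. -/
theorem convex_radius_ge_half_pi_diam_pi
    {E : Type*} [NormedAddCommGroup E] [InnerProductSpace ℝ E] [FiniteDimensional ℝ E]
    (hdim : 1 ≤ Module.finrank ℝ E)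
    (A : Set E) (hA : A ⊆ {x : E | ‖x‖ = 1}) (hne : A.Nonempty)
    (hclosed : IsClosed A) (hconv : SphericallyConvex A)
    (hrad : ∀ a ∈ A, ∃ b ∈ A, ⟪a, b⟫ ≤ 0) :
    (⨆ a : A, ⨆ b : A, Real.arccos ⟪(a : E), (b : E)⟫) = Real.pi ∧
      ∃ a ∈ A, -a ∈ A := by
  have hnorm : ∀ a ∈ A, ‖a‖ = 1 := fun a ha => hA ha
  have key : ∃ a ∈ A, -a ∈ A := by
    by_contra hcon
    push_neg at hcon
    -- no antipodal pair: inner products are > -1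
    have hip : ∀ a ∈ A, ∀ b ∈ A, -1 < ⟪a, b⟫ := by
      intro a ha b hb
      have hab : a + b ≠ 0 := by
        intro h
        exact hcon b hb (eq_neg_of_add_eq_zero_left h ▸ ha)
      have h2 : (0 : ℝ) < ‖a + b‖ ^ 2 := pow_pos (norm_pos_iff.mpr hab) 2
      have h3 := norm_add_sq_real a b
      rw [hnorm a ha, hnorm b hb] at h3
      nlinarith
    -- the cone over A (without 0)
    set B : Set E := {v | ∃ a ∈ A, ∃ r : ℝ, 0 < r ∧ v = r • a} with hBdef
    have hAB : A ⊆ B := fun a ha => ⟨a, ha, 1, one_pos, (one_smul ℝ a).symm⟩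
    have hBconv : Convex ℝ B := by
      rintro v ⟨a, ha, r, hr, rfl⟩ w ⟨b, hb, q, hq, rfl⟩ s t hs ht hst
      rcases eq_or_lt_of_le hs with hs0 | hs0
      · have ht1 : t = 1 := by linarith
        refine ⟨b, hb, q, hq, ?_⟩
        rw [← hs0, ht1]
        simp
      rcases eq_or_lt_of_le ht with ht0 | ht0
      · have hs1 : s = 1 := by linarith
        refine ⟨a, ha, r, hr, ?_⟩
        rw [← ht0, hs1]
        simp
      · -- both coefficients positive
        have hba : b ≠ -a := fun h => hcon a ha (h ▸ hb)
        have hα : 0 < s * r := mul_pos hs0 hr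
        have hβ : 0 < t * q := mul_pos ht0 hq
        set c : ℝ := s * r + t * q with hc
        have hc0 : 0 < c := by positivity
        set t' : ℝ := (t * q) / c with ht'
        have ht'0 : 0 < t' := div_pos hβ hc0
        have ht'1 : t' < 1 := by
          rw [ht', div_lt_one hc0]
          linarith
        set p : E := (1 - t') • a + t' • b with hp
        have hpA : (‖p‖)⁻¹ • p ∈ A := hconv a ha b hb hba t' ht'0.le ht'1.le
        have haa : ⟪a, a⟫ = 1 := by
          rw [real_inner_self_eq_norm_mul_norm, hnorm a ha]; norm_num
        have hbb : ⟪b, b⟫ = 1 := by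
          rw [real_inner_self_eq_norm_mul_norm, hnorm b hb]; norm_num
        have hpp : ⟪p, p⟫ = (1 - t') ^ 2 + 2 * ((1 - t') * t') * ⟪a, b⟫ + t' ^ 2 := by
          rw [hp, real_inner_add_add_self]
          simp only [real_inner_smul_left, real_inner_smul_right, haa, hbb]
          ring
        have hab1 := hip a ha b hb
        have hpos' : 0 < (1 - t') * t' := mul_pos (by linarith) ht'0
        have hppos : 0 < ⟪p, p⟫ := by
          rw [hpp]
          nlinarith [sq_nonneg (1 - 2 * t'), mul_lt_mul_of_pos_left hab1 hpos']
        have hp0 : p ≠ 0 := fun h => by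
          rw [h, inner_zero_left] at hppos
          exact lt_irrefl 0 hppos
        have hpn : ‖p‖ ≠ 0 := norm_ne_zero_iff.mpr hp0
        refine ⟨(‖p‖)⁻¹ • p, hpA, c * ‖p‖, by positivity, ?_⟩
        have h2 : c * t' = t * q := by
          rw [ht', mul_div_cancel₀ _ (ne_of_gt hc0)]
        have h1 : c * (1 - t') = s * r := by
          rw [mul_one_sub, h2, hc]; ring
        calc s • (r • a) + t • (q • b)
            = (c * (1 - t')) • a + (c * t') • b := by
              rw [smul_smul, smul_smul, h1, h2]
          _ = c • p := by rw [hp, smul_add, smul_smul, smul_smul]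
          _ = (c * ‖p‖) • (‖p‖)⁻¹ • p := by
              rw [smul_smul, mul_assoc, mul_inv_cancel₀ hpn, mul_one]
    -- compactness of the convex hull
    have hAbound : Bornology.IsBounded A := by
      refine (Metric.isBounded_closedBall (x := (0 : E)) (r := 1)).subset ?_
      intro x hx
      simp only [Metric.mem_closedBall, dist_zero_right]
      rw [hnorm x hx]
    have hAcomp : IsCompact A := Metric.isCompact_of_isClosed_isBounded hclosed hAbound
    have hK : IsCompact (convexHull ℝ A) := isCompact_convexHull_aux hne hAcomp
    have hKne : (convexHull ℝ A).Nonempty := hne.mono (subset_convexHull ℝ A)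
    obtain ⟨v, hvK, hvmin⟩ := exists_norm_eq_iInf_of_complete_convex hKne
      hK.isClosed.isComplete (convex_convexHull ℝ A) 0
    have hchar := (norm_eq_iInf_iff_real_inner_le_zero (convex_convexHull ℝ A) hvK).mp hvmin
    have hvB : v ∈ B := convexHull_min hAB hBconv hvK
    obtain ⟨a, ha, r, hr, rfl⟩ := hvB
    obtain ⟨b, hb, habip⟩ := hrad a ha
    have hbK : b ∈ convexHull ℝ A := subset_convexHull ℝ A hb
    have h1 := hchar b hbK
    have haa : ⟪a, a⟫ = 1 := by
      rw [real_inner_self_eq_norm_mul_norm, hnorm a ha]; norm_num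
    rw [zero_sub, inner_neg_left, inner_sub_right, real_inner_smul_left, real_inner_smul_left,
      real_inner_smul_right, haa] at h1
    nlinarith
  obtain ⟨a, ha, hna⟩ := key
  refine ⟨?_, a, ha, hna⟩
  haveI : Nonempty A := hne.to_subtype
  have hπ : Real.arccos ⟪a, (-a : E)⟫ = Real.pi := by
    have h : ⟪a, (-a : E)⟫ = -1 := by
      rw [inner_neg_right, real_inner_self_eq_norm_mul_norm, hnorm a ha]; norm_num
    rw [h, Real.arccos_neg_one]
  apply le_antisymm
  · exact ciSup_le fun x => ciSup_le fun y => Real.arccos_le_pi _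
  · have hbdd : ∀ x : A, BddAbove (Set.range fun y : A => Real.arccos ⟪(x : E), (y : E)⟫) :=
      fun x => ⟨Real.pi, by rintro _ ⟨y, rfl⟩; exact Real.arccos_le_pi _⟩
    have hbdd2 : BddAbove (Set.range fun x : A =>
        ⨆ y : A, Real.arccos ⟪(x : E), (y : E)⟫) :=
      ⟨Real.pi, by rintro _ ⟨x, rfl⟩; exact ciSup_le fun y => Real.arccos_le_pi _⟩
    calc Real.pi = Real.arccos ⟪a, (-a : E)⟫ := hπ.symm
      _ ≤ ⨆ y : A, Real.arccos ⟪(a : E), (y : E)⟫ :=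
          le_ciSup (hbdd ⟨a, ha⟩) (⟨-a, hna⟩ : A)
      _ ≤ ⨆ x : A, ⨆ y : A, Real.arccos ⟪(x : E), (y : E)⟫ :=
          le_ciSup hbdd2 (⟨a, ha⟩ : A)
end

section
/- Let A be a nonempty closed spherically convex subset of the unit sphere S of a finite-dimensional real inner product space E. Then rad A < π/2 (i.e., there exists a ∈ A with sup_{b ∈ A} arccos⟨a,b⟩ < π/2) if and only if A lies in an open hemisphere, i.e., there exists a unit vector v ∈ E with ⟨v,a⟩ > 0 for all a ∈ A. -/
open scoped RealInnerProductSpace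

/-- A nonempty closed spherically convex subset of the unit sphere has radius `< π/2`
if and only if it lies in an open hemisphere. -/
theorem radius_lt_half_pi_iff_open_hemisphere
    {E : Type*} [NormedAddCommGroup E] [InnerProductSpace ℝ E] [FiniteDimensional ℝ E]
    (hdim : 1 ≤ Module.finrank ℝ E)
    (A : Set E) (hA : A ⊆ {x : E | ‖x‖ = 1}) (hne : A.Nonempty)
    (hclosed : IsClosed A) (hconv : SphericallyConvex A) :
    (∃ a ∈ A, (⨆ b : A, Real.arccos ⟪a, (b : E)⟫) < Real.pi / 2) ↔
      ∃ v : E, ‖v‖ = 1 ∧ ∀ a ∈ A, 0 < ⟪v, a⟫ := by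
  haveI : Nonempty A := hne.to_subtype
  constructor
  · rintro ⟨a, ha, hsup⟩
    refine ⟨a, hA ha, fun b hb => ?_⟩
    have hbd : BddAbove (Set.range fun b : A => Real.arccos ⟪a, (b : E)⟫) :=
      ⟨Real.pi, by rintro x ⟨y, rfl⟩; exact Real.arccos_le_pi _⟩
    have h1 : Real.arccos ⟪a, b⟫ ≤ ⨆ b : A, Real.arccos ⟪a, (b : E)⟫ :=
      le_ciSup hbd (⟨b, hb⟩ : A)
    by_contra hle
    push_neg at hle
    have h2 := Real.arcsin_nonpos.2 hle
    rw [Real.arccos_eq_pi_div_two_sub_arcsin] at h1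
    linarith
  · rintro ⟨v, hv, hvA⟩
    -- A is compact
    have hAbd : Bornology.IsBounded A := by
      refine (Metric.isBounded_closedBall (x := (0:E)) (r := 1)).subset fun x hx => ?_
      simp only [Metric.mem_closedBall, dist_zero_right]
      exact (hA hx).le
    have hAcomp : IsCompact A := Metric.isCompact_of_isClosed_isBounded hclosed hAbd
    -- minimum of ⟪v,·⟫ on A
    have hcont : Continuous fun x : E => ⟪v, x⟫ := continuous_const.inner continuous_id
    obtain ⟨a₀, ha₀A, ha₀min⟩ := hAcomp.exists_isMinOn hne hcont.continuousOn
    set c : ℝ := ⟪v, a₀⟫ with hc_def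
    have hc : 0 < c := hvA a₀ ha₀A
    have hcA : ∀ a ∈ A, c ≤ ⟪v, a⟫ := fun a haA => isMinOn_iff.1 ha₀min a haA
    have hna₀ : ‖a₀‖ = 1 := hA ha₀A
    -- the cone over A
    set D : Set E := {x : E | ∃ r : ℝ, 0 ≤ r ∧ ∃ a ∈ A, x = r • a} with hD_def
    have hAD : A ⊆ D := fun a haA => ⟨1, zero_le_one, a, haA, (one_smul ℝ a).symm⟩
    have hDconv : Convex ℝ D := by
      rw [hD_def]
      rintro x ⟨r, hr, a, haA, rfl⟩ y ⟨s, hs, b, hbA, rfl⟩ p q hp hq hpq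
      have hkey : p • r • a + q • s • b = (p * r) • a + (q * s) • b := by
        rw [smul_smul, smul_smul]
      rcases eq_or_lt_of_le (mul_nonneg hp hr) with h1 | h1
      · rcases eq_or_lt_of_le (mul_nonneg hq hs) with h2 | h2
        · exact ⟨0, le_rfl, a₀, ha₀A, by rw [hkey, ← h1, ← h2]; simp⟩
        · exact ⟨q * s, h2.le, b, hbA, by rw [hkey, ← h1]; simp⟩
      · rcases eq_or_lt_of_le (mul_nonneg hq hs) with h2 | h2
        · exact ⟨p * r, h1.le, a, haA, by rw [hkey, ← h2]; simp⟩
        · set lam : ℝ := p * r + q * s with hlam_def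
          have hlam : 0 < lam := add_pos h1 h2
          set u : ℝ := (q * s) / lam with hu_def
          have hu0 : 0 < u := div_pos h2 hlam
          have hu1 : u ≤ 1 := by rw [hu_def, div_le_one hlam]; linarith
          have h1u : 1 - u = (p * r) / lam := by
            rw [hu_def, eq_div_iff hlam.ne', sub_mul, div_mul_cancel₀ _ hlam.ne', one_mul,
              hlam_def]; ring
          have h1u0 : 0 < 1 - u := by rw [h1u]; exact div_pos h1 hlam
          have hb_ne : b ≠ -a := by
            intro h
            have hva := hvA a haA
            have hvb := hvA b hbA
            rw [h, inner_neg_right] at hvb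
            linarith
          have hwA : (‖(1 - u) • a + u • b‖)⁻¹ • ((1 - u) • a + u • b) ∈ A :=
            hconv a haA b hbA hb_ne u hu0.le hu1
          set w : E := (1 - u) • a + u • b with hw_def
          have hw_inner : 0 < ⟪v, w⟫ := by
            rw [hw_def, inner_add_right, real_inner_smul_right, real_inner_smul_right]
            have hva := hvA a haA
            have hvb := hvA b hbA
            nlinarith
          have hwne : w ≠ 0 := by
            intro h
            rw [h, inner_zero_right] at hw_inner
            exact lt_irrefl 0 hw_inner
          have hnw : ‖w‖ ≠ 0 := norm_ne_zero_iff.2 hwne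
          refine ⟨lam * ‖w‖, by positivity, _, hwA, ?_⟩
          have e1 : lam * (1 - u) = p * r := by
            rw [h1u, mul_comm, div_mul_cancel₀ _ hlam.ne']
          have e2 : lam * u = q * s := by
            rw [hu_def, mul_comm, div_mul_cancel₀ _ hlam.ne']
          rw [hkey, smul_smul, mul_assoc, mul_inv_cancel₀ hnw, mul_one, hw_def, smul_add,
            smul_smul, smul_smul, e1, e2]
    -- intersections of D with balls are compact
    have hDball : ∀ R : ℝ, 0 ≤ R → IsCompact (D ∩ Metric.closedBall 0 R) := by
      intro R hR
      have heq : D ∩ Metric.closedBall 0 R =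
          (fun p : ℝ × E => p.1 • p.2) '' (Set.Icc 0 R ×ˢ A) := by
        ext x
        constructor
        · rintro ⟨⟨r, hr, a, haA, rfl⟩, hball⟩
          have hna : ‖a‖ = 1 := hA haA
          rw [Metric.mem_closedBall, dist_zero_right, norm_smul, hna, mul_one,
            Real.norm_eq_abs, abs_of_nonneg hr] at hball
          exact ⟨(r, a), ⟨⟨hr, hball⟩, haA⟩, rfl⟩
        · rintro ⟨⟨r, a⟩, ⟨⟨hr0, hrR⟩, haA⟩, rfl⟩
          dsimp only at hr0 hrR haA ⊢
          have hna : ‖a‖ = 1 := hA haA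
          refine ⟨⟨r, hr0, a, haA, rfl⟩, ?_⟩
          rw [Metric.mem_closedBall, dist_zero_right, norm_smul, hna, mul_one,
            Real.norm_eq_abs, abs_of_nonneg hr0]
          exact hrR
      rw [heq]
      exact (isCompact_Icc.prod hAcomp).image (continuous_fst.smul continuous_snd)
    have hDclosed : IsClosed D := by
      refine isClosed_of_closure_subset fun x hx => ?_
      have h1 : x ∈ closure (D ∩ Metric.closedBall 0 (‖x‖ + 1)) := by
        rw [Metric.mem_closure_iff] at hx ⊢
        intro ε hε
        obtain ⟨y, hyD, hxy⟩ := hx (min ε 1) (lt_min hε one_pos)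
        refine ⟨y, ⟨hyD, ?_⟩, lt_of_lt_of_le hxy (min_le_left _ _)⟩
        have hxy1 : dist x y < 1 := lt_of_lt_of_le hxy (min_le_right _ _)
        rw [Metric.mem_closedBall, dist_zero_right]
        have h2 : ‖y‖ - ‖x‖ ≤ ‖y - x‖ := norm_sub_norm_le y x
        rw [← dist_eq_norm, dist_comm] at h2
        linarith
      have h2 := (hDball (‖x‖ + 1) (by positivity)).isClosed
      rw [h2.closure_eq] at h1
      exact h1.1
    -- the halfspace
    set H : Set E := {x : E | c ≤ ⟪v, x⟫} with hH_def
    have hlin : IsLinearMap ℝ fun x : E => ⟪v, x⟫ :=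
      ⟨fun x y => inner_add_right v x y, fun t x => real_inner_smul_right v x t⟩
    have hHconv : Convex ℝ H := convex_halfSpace_ge hlin c
    have hHclosed : IsClosed H := isClosed_le continuous_const hcont
    have hAK : A ⊆ D ∩ H := fun a haA => ⟨hAD haA, hcA a haA⟩
    -- compact piece
    have hK'comp : IsCompact (D ∩ H ∩ Metric.closedBall 0 1) := by
      have heq : D ∩ H ∩ Metric.closedBall 0 1 = (D ∩ Metric.closedBall 0 1) ∩ H := by
        ext x
        constructor
        · rintro ⟨⟨h1, h2⟩, h3⟩; exact ⟨⟨h1, h3⟩, h2⟩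
        · rintro ⟨⟨h1, h3⟩, h2⟩; exact ⟨⟨h1, h2⟩, h3⟩
      rw [heq]
      exact (hDball 1 zero_le_one).inter_right hHclosed
    have ha₀ball : a₀ ∈ Metric.closedBall (0:E) 1 := by
      rw [Metric.mem_closedBall, dist_zero_right, hna₀]
    obtain ⟨m, hmK', hmmin⟩ := hK'comp.exists_isMinOn ⟨a₀, ⟨hAK ha₀A, ha₀ball⟩⟩
      continuous_norm.continuousOn
    have hmD : m ∈ D := hmK'.1.1
    have hmH : m ∈ H := hmK'.1.2
    have hm1 : ‖m‖ ≤ 1 := by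
      have := hmK'.2
      rwa [Metric.mem_closedBall, dist_zero_right] at this
    have hmmin' : ∀ y ∈ D ∩ H, ‖m‖ ≤ ‖y‖ := by
      intro y hy
      by_cases h : ‖y‖ ≤ 1
      · exact isMinOn_iff.1 hmmin y ⟨hy, by rwa [Metric.mem_closedBall, dist_zero_right]⟩
      · linarith
    have hm0 : m ≠ 0 := by
      intro h
      have h2 : c ≤ ⟪v, m⟫ := hmH
      rw [h, inner_zero_right] at h2
      linarith
    have hmpos : 0 < ‖m‖ := norm_pos_iff.2 hm0
    -- variational inequality
    have hvar : ∀ x ∈ D ∩ H, ‖m‖ ^ 2 ≤ ⟪m, x⟫ := by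
      intro x hx
      by_contra hcon
      push_neg at hcon
      set cc : ℝ := ⟪m, x - m⟫ with hcc
      have hccneg : cc < 0 := by
        rw [hcc, inner_sub_right, real_inner_self_eq_norm_sq]
        linarith
      have hxm : x - m ≠ 0 := by
        intro h
        rw [hcc, h, inner_zero_right] at hccneg
        exact lt_irrefl 0 hccneg
      set d : ℝ := ‖x - m‖ ^ 2 with hd
      have hdpos : 0 < d := by
        rw [hd]
        exact pow_pos (norm_pos_iff.2 hxm) 2
      set t : ℝ := min 1 (-cc / d) with ht
      have htpos : 0 < t := lt_min one_pos (div_pos (neg_pos.2 hccneg) hdpos)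
      have ht1 : t ≤ 1 := min_le_left _ _
      have htd : t * d ≤ -cc := by
        have h2 : t ≤ -cc / d := min_le_right _ _
        calc t * d ≤ (-cc / d) * d := by nlinarith
          _ = -cc := by field_simp
      have hpt0 : (1 - t) • m + t • x ∈ D ∩ H :=
        (hDconv.inter hHconv) ⟨hmD, hmH⟩ hx (by linarith) htpos.le (by ring)
      have heq : (1 - t) • m + t • x = m + t • (x - m) := by
        rw [smul_sub, sub_smul, one_smul]; abel
      rw [heq] at hpt0
      have hnorml : ‖m‖ ≤ ‖m + t • (x - m)‖ := hmmin' _ hpt0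
      have hexp : ‖m + t • (x - m)‖ ^ 2 = ‖m‖ ^ 2 + 2 * (t * cc) + t ^ 2 * d := by
        rw [norm_add_sq_real, real_inner_smul_right, ← hcc, norm_smul, mul_pow, Real.norm_eq_abs,
          sq_abs, ← hd]
      have hsq : ‖m‖ ^ 2 ≤ ‖m + t • (x - m)‖ ^ 2 := by
        nlinarith [norm_nonneg m]
      rw [hexp] at hsq
      nlinarith [mul_le_mul_of_nonneg_left htd htpos.le, mul_pos htpos (neg_pos.2 hccneg)]
    -- extract the direction
    obtain ⟨r, hr0, a, haA, hma⟩ := hmD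
    have hna : ‖a‖ = 1 := hA haA
    have hrm : r = ‖m‖ := by
      rw [hma, norm_smul, hna, mul_one, Real.norm_eq_abs, abs_of_nonneg hr0]
    refine ⟨a, haA, ?_⟩
    have hb_lb : ∀ b ∈ A, ‖m‖ ≤ ⟪a, b⟫ := by
      intro b hbA
      have h1 : ‖m‖ ^ 2 ≤ ⟪m, b⟫ := hvar b (hAK hbA)
      have h2 : ⟪m, b⟫ = r * ⟪a, b⟫ := by rw [hma, real_inner_smul_left]
      rw [h2, hrm] at h1
      nlinarith
    have hsup : ∀ b : A, Real.arccos ⟪a, (b : E)⟫ ≤ Real.pi / 2 - Real.arcsin ‖m‖ := by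
      intro b
      rw [Real.arccos_eq_pi_div_two_sub_arcsin]
      have := Real.monotone_arcsin (hb_lb b b.2)
      linarith
    calc (⨆ b : A, Real.arccos ⟪a, (b : E)⟫) ≤ Real.pi / 2 - Real.arcsin ‖m‖ := ciSup_le hsup
      _ < Real.pi / 2 := by linarith [Real.arcsin_pos.2 hmpos]
end

section
/- Let A be a closed spherically convex subset of the unit sphere S of a finite-dimensional real inner product space E, and assume A ≠ S. Then A lies in a closed hemisphere: there exists a unit vector v ∈ E with ⟨v,a⟩ ≥ 0 for all a ∈ A. -/
open scoped RealInnerProductSpace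

/-- A closed spherically convex proper subset of the unit sphere lies in a
closed hemisphere. -/
theorem convex_proper_subset_closed_hemisphere
    {E : Type*} [NormedAddCommGroup E] [InnerProductSpace ℝ E] [FiniteDimensional ℝ E]
    (hdim : 1 ≤ Module.finrank ℝ E)
    (A : Set E) (hA : A ⊆ {x : E | ‖x‖ = 1})
    (hclosed : IsClosed A) (hconv : SphericallyConvex A)
    (hproper : A ≠ {x : E | ‖x‖ = 1}) :
    ∃ v : E, ‖v‖ = 1 ∧ ∀ a ∈ A, 0 ≤ ⟪v, a⟫ := by
  classical
  set C : Set E := {w : E | w ≠ 0 → ‖w‖⁻¹ • w ∈ A} with hCdef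
  -- normalization is scale-invariant
  have hnorm : ∀ (c : ℝ) (w : E), 0 < c → ‖c • w‖⁻¹ • (c • w) = ‖w‖⁻¹ • w := by
    intro c w hc
    rcases eq_or_ne w 0 with rfl | hw
    · simp
    rw [norm_smul, Real.norm_eq_abs, abs_of_pos hc, mul_inv, smul_smul]
    congr 1
    have hw' : ‖w‖ ≠ 0 := norm_ne_zero_iff.mpr hw
    field_simp
  -- A ⊆ C
  have hAC : A ⊆ C := by
    intro a ha
    intro _
    have h1 : ‖a‖ = 1 := hA ha
    rw [h1]
    simpa using ha
  -- C is a cone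
  have hcone : ∀ w ∈ C, ∀ c : ℝ, 0 ≤ c → c • w ∈ C := by
    intro w hw c hc
    intro hne
    have hc0 : c ≠ 0 := by rintro rfl; simp at hne
    have hcpos : 0 < c := lt_of_le_of_ne hc (Ne.symm hc0)
    have hw0 : w ≠ 0 := by rintro rfl; simp at hne
    rw [hnorm c w hcpos]
    exact hw hw0
  have h0C : (0 : E) ∈ C := by intro h; simp at h
  -- key: positive combinations of two elements of A, normalized, lie in A
  have hkey : ∀ x ∈ A, ∀ y ∈ A, ∀ α β : ℝ, 0 ≤ α → 0 ≤ β →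
      (α • x + β • y ≠ 0) → ‖α • x + β • y‖⁻¹ • (α • x + β • y) ∈ A := by
    intro x hx y hy α β hα hβ hne
    rcases eq_or_lt_of_le hα with rfl | hαpos
    · -- α = 0
      have hβpos : 0 < β := by
        rcases eq_or_lt_of_le hβ with rfl | h
        · exfalso; apply hne; simp
        · exact h
      have : (0:ℝ) • x + β • y = β • y := by simp
      rw [this, hnorm β y hβpos]
      have : ‖y‖ = 1 := hA hy
      rw [this]; simpa using hy
    rcases eq_or_lt_of_le hβ with rfl | hβpos
    · have : α • x + (0:ℝ) • y = α • x := by simp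
      rw [this, hnorm α x hαpos]
      have : ‖x‖ = 1 := hA hx
      rw [this]; simpa using hx
    -- both positive
    by_cases hyx : y = -x
    · -- collinear case
      subst hyx
      have hxy : α • x + β • (-x) = (α - β) • x := by
        rw [smul_neg, sub_smul]; abel
      rw [hxy] at hne ⊢
      rcases lt_trichotomy α β with h | h | h
      · have hpos : 0 < β - α := by linarith
        have : (α - β) • x = (β - α) • (-x) := by
          rw [smul_neg]; rw [← neg_smul]; ring_nf
        rw [this, hnorm _ _ hpos]
        have : ‖(-x)‖ = 1 := hA hy
        rw [this]; simpa using hy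
      · exfalso; apply hne; rw [h]; simp
      · have hpos : 0 < α - β := by linarith
        rw [hnorm _ _ hpos]
        have : ‖x‖ = 1 := hA hx
        rw [this]; simpa using hx
    · -- genuine spherical convexity
      have hs : 0 < α + β := by linarith
      set t : ℝ := β / (α + β) with ht
      have ht0 : 0 ≤ t := div_nonneg hβ hs.le
      have ht1 : t ≤ 1 := by
        rw [div_le_one hs]; linarith
      have h1t : (1 - t) = α / (α + β) := by
        rw [ht]
        field_simp
        ring
      have hcomb : (α + β) • ((1 - t) • x + t • y) = α • x + β • y := by
        rw [h1t, ht, smul_add, smul_smul, smul_smul]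
        congr 2 <;> field_simp
      have := hconv x hx y hy hyx t ht0 ht1
      rw [← hcomb, hnorm _ _ hs]
      exact this
  -- C is convex
  have hconvC : Convex ℝ C := by
    intro w₁ hw₁ w₂ hw₂ a b ha hb hab
    intro hne
    rcases eq_or_ne w₁ 0 with rfl | h1
    · rcases eq_or_ne w₂ 0 with rfl | h2
      · exfalso; apply hne; simp
      · have := hcone w₂ hw₂ b hb
        have h' : a • (0:E) + b • w₂ = b • w₂ := by simp
        rw [h'] at hne ⊢
        exact this hne
    rcases eq_or_ne w₂ 0 with rfl | h2
    · have := hcone w₁ hw₁ a ha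
      have h' : a • w₁ + b • (0:E) = a • w₁ := by simp
      rw [h'] at hne ⊢
      exact this hne
    · have hx : ‖w₁‖⁻¹ • w₁ ∈ A := hw₁ h1
      have hy : ‖w₂‖⁻¹ • w₂ ∈ A := hw₂ h2
      have hn1 : 0 < ‖w₁‖ := norm_pos_iff.mpr h1
      have hn2 : 0 < ‖w₂‖ := norm_pos_iff.mpr h2
      have hrw : a • w₁ + b • w₂ =
          (a * ‖w₁‖) • (‖w₁‖⁻¹ • w₁) + (b * ‖w₂‖) • (‖w₂‖⁻¹ • w₂) := by
        rw [smul_smul, smul_smul]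
        congr 2 <;> field_simp
      rw [hrw] at hne ⊢
      exact hkey _ hx _ hy (a * ‖w₁‖) (b * ‖w₂‖)
        (mul_nonneg ha hn1.le) (mul_nonneg hb hn2.le) hne
  -- C is closed
  have hclosedC : IsClosed C := by
    refine isClosed_of_closure_subset ?_
    intro w hw
    intro hwne
    have hwpos : 0 < ‖w‖ := norm_pos_iff.mpr hwne
    obtain ⟨u, huC, hu⟩ := mem_closure_iff_seq_limit.1 hw
    have hcont : Filter.Tendsto (fun n => ‖u n‖⁻¹ • u n) Filter.atTop
        (nhds (‖w‖⁻¹ • w)) := by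
      have h1 : Filter.Tendsto (fun n => ‖u n‖⁻¹) Filter.atTop (nhds ‖w‖⁻¹) :=
        ((continuous_norm.tendsto w).comp hu).inv₀ hwpos.ne'
      exact h1.smul hu
    refine hclosed.mem_of_tendsto hcont ?_
    have hev : ∀ᶠ n in Filter.atTop, u n ≠ 0 := by
      have : ∀ᶠ n in Filter.atTop, ‖w‖/2 < ‖u n‖ := by
        have := (continuous_norm.tendsto w).comp hu
        exact this.eventually (eventually_gt_nhds (by linarith))
      filter_upwards [this] with n hn
      intro h; rw [h] at hn; simp at hn; linarith
    filter_upwards [hev] with n hn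
    exact huC n hn
  -- there is a unit vector not in C
  have hsub : ∃ x : E, ‖x‖ = 1 ∧ x ∉ A := by
    by_contra h
    push_neg at h
    apply hproper
    apply Set.Subset.antisymm hA
    intro x hx
    exact h x hx
  obtain ⟨x, hx1, hxA⟩ := hsub
  have hxC : x ∉ C := by
    intro hxC
    have hx0 : x ≠ 0 := by intro h; rw [h] at hx1; simp at hx1
    have := hxC hx0
    rw [hx1] at this
    simp at this
    exact hxA this
  -- separate
  obtain ⟨f, u, hfu, hux⟩ := geometric_hahn_banach_closed_point hconvC hclosedC hxC
  have hu0 : 0 < u := hfu 0 h0C |>.trans_le' (by simp)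
  have hfC : ∀ w ∈ C, f w ≤ 0 := by
    intro w hw
    by_contra h
    push_neg at h
    have h2 : ((2 * u) / f w) • w ∈ C := hcone w hw _ (by positivity)
    have := hfu _ h2
    rw [map_smul] at this
    simp only [smul_eq_mul] at this
    rw [div_mul_cancel₀ _ h.ne'] at this
    linarith
  -- build v
  set y : E := -(InnerProductSpace.toDual ℝ E).symm f with hy
  have hy0 : y ≠ 0 := by
    intro h
    have hf0 : f = 0 := by
      have : (InnerProductSpace.toDual ℝ E).symm f = 0 := by
        rw [hy] at h; simpa using h
      have := congrArg (InnerProductSpace.toDual ℝ E) this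
      simpa using this
    rw [hf0] at hux
    simp at hux
    linarith
  have hny : 0 < ‖y‖ := norm_pos_iff.mpr hy0
  refine ⟨‖y‖⁻¹ • y, ?_, ?_⟩
  · rw [norm_smul, Real.norm_eq_abs, abs_of_pos (by positivity)]
    field_simp
  · intro a ha
    have hfa : f a ≤ 0 := hfC a (hAC ha)
    have : ⟪y, a⟫ = -(f a) := by
      rw [hy, inner_neg_left, InnerProductSpace.toDual_symm_apply]
    rw [real_inner_smul_left, this]
    have : 0 ≤ -(f a) := by linarith
    positivity
end

section
/- Let A be a nonempty closed subset of the unit sphere S of a finite-dimensional real inner product space E, and let v ∈ E be a unit vector with ⟨v,a⟩ ≥ 0 for all a ∈ A (so A lies in the closed hemisphere H determined by v). Suppose that either A ∩ v^⊥ = ∅, or there exists c ∈ A ∩ v^⊥ with ⟨c,b⟩ > 0 for every b ∈ A ∩ v^⊥ (i.e., the radius of A ∩ ∂H is < π/2). Then A lies in an open hemisphere: there exists a unit vector w ∈ E with ⟨w,a⟩ > 0 for all a ∈ A. -/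
open scoped RealInnerProductSpace

/-- Helper: a nonzero vector with positive inner products normalizes to a unit one. -/
theorem aux_normalize {E : Type*} [NormedAddCommGroup E] [InnerProductSpace ℝ E]
    (A : Set E) (u : E) (hu : u ≠ 0) (h : ∀ a ∈ A, 0 < ⟪u, a⟫) :
    ∃ w : E, ‖w‖ = 1 ∧ ∀ a ∈ A, 0 < ⟪w, a⟫ := by
  have hn : (0:ℝ) < ‖u‖ := norm_pos_iff.mpr hu
  refine ⟨‖u‖⁻¹ • u, ?_, fun a ha => ?_⟩
  · rw [norm_smul, norm_inv, norm_norm, inv_mul_cancel₀ hn.ne']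
  · rw [real_inner_smul_left]
    exact mul_pos (inv_pos.mpr hn) (h a ha)

/-- Let `A` be a nonempty closed subset of the unit sphere contained in the closed
hemisphere determined by a unit vector `v`.  If either `A` misses the boundary great
sphere `v^⊥`, or there is a point `c ∈ A ∩ v^⊥` whose inner product with every point
of `A ∩ v^⊥` is positive (radius of `A ∩ ∂H` less than `π/2`), then `A` lies in an
open hemisphere. -/
theorem closed_hemisphere_to_open_hemisphere
    {E : Type*} [NormedAddCommGroup E] [InnerProductSpace ℝ E] [FiniteDimensional ℝ E]
    (A : Set E) (hA : A ⊆ {x : E | ‖x‖ = 1}) (hne : A.Nonempty) (hclosed : IsClosed A)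
    (v : E) (hv : ‖v‖ = 1) (hhemi : ∀ a ∈ A, 0 ≤ ⟪v, a⟫)
    (hbdry : (∀ a ∈ A, ⟪v, a⟫ ≠ 0) ∨
      (∃ c ∈ A, ⟪v, c⟫ = 0 ∧ ∀ b ∈ A, ⟪v, b⟫ = 0 → 0 < ⟪c, b⟫)) :
    ∃ w : E, ‖w‖ = 1 ∧ ∀ a ∈ A, 0 < ⟪w, a⟫ := by
  rcases hbdry with h1 | ⟨c, hcA, hvc, hcpos⟩
  · exact ⟨v, hv, fun a ha => lt_of_le_of_ne (hhemi a ha) (Ne.symm (h1 a ha))⟩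
  · -- A is compact
    have hAcomp : IsCompact A := by
      refine (isCompact_sphere (0:E) 1).of_isClosed_subset hclosed ?_
      intro x hx
      simpa [mem_sphere_zero_iff_norm] using hA hx
    have hccont : Continuous fun a : E => ⟪c, a⟫ := continuous_const.inner continuous_id
    have hvcont : Continuous fun a : E => ⟪v, a⟫ := continuous_const.inner continuous_id
    set K : Set E := A ∩ {a | ⟪c, a⟫ ≤ 0} with hK
    have hKcomp : IsCompact K :=
      hAcomp.of_isClosed_subset (hclosed.inter (isClosed_le hccont continuous_const))
        Set.inter_subset_left
    -- get a positive ε with ∀ a ∈ A, 0 < ⟪v + ε • c, a⟫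
    have key : ∃ ε : ℝ, 0 < ε ∧ ∀ a ∈ A, 0 < ⟪v + ε • c, a⟫ := by
      rcases K.eq_empty_or_nonempty with hKe | hKne
      · refine ⟨1, one_pos, fun a ha => ?_⟩
        have hca : 0 < ⟪c, a⟫ := by
          by_contra h
          have hmem : a ∈ K := ⟨ha, le_of_not_gt h⟩
          rw [hKe] at hmem
          exact hmem
        rw [inner_add_left, real_inner_smul_left]
        nlinarith [hhemi a ha]
      · obtain ⟨a₀, ha₀K, hmin⟩ := hKcomp.exists_isMinOn hKne hvcont.continuousOn
        have hm : 0 < ⟪v, a₀⟫ := by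
          rcases lt_or_eq_of_le (hhemi a₀ ha₀K.1) with h | h
          · exact h
          · exact absurd (hcpos a₀ ha₀K.1 h.symm) (not_lt.mpr ha₀K.2)
        refine ⟨⟪v, a₀⟫ / 2, by positivity, fun a ha => ?_⟩
        rw [inner_add_left, real_inner_smul_left]
        by_cases haK : a ∈ K
        · have hlb : -1 ≤ ⟪c, a⟫ := by
            have := abs_real_inner_le_norm c a
            have h1 : ‖c‖ = 1 := hA hcA
            have h2 : ‖a‖ = 1 := hA ha
            rw [h1, h2] at this
            nlinarith [abs_nonneg ⟪c, a⟫, neg_abs_le ⟪c, a⟫]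
          have hma : ⟪v, a₀⟫ ≤ ⟪v, a⟫ := hmin haK
          nlinarith
        · have hca : 0 < ⟪c, a⟫ := by
            by_contra h
            exact haK ⟨ha, le_of_not_gt h⟩
          nlinarith [hhemi a ha]
    obtain ⟨ε, hε, hpos⟩ := key
    have hne0 : v + ε • c ≠ 0 := by
      intro h0
      have : ⟪v, v + ε • c⟫ = 0 := by rw [h0, inner_zero_right]
      rw [inner_add_right, real_inner_smul_right, hvc, real_inner_self_eq_norm_sq, hv] at this
      norm_num at this
    exact aux_normalize A (v + ε • c) hne0 hpos
end

section
/- Let n ≥ 2 and let u, v be unit vectors in Euclidean space ℝ^{n+1} with v ≠ −u. The Alexandrov lens L = {x ∈ ℝ^{n+1} : ‖x‖ = 1, ⟨x,u⟩ ≥ 0, ⟨x,v⟩ ≥ 0} has maximal radius: inf_{x ∈ L} sup_{y ∈ L} arccos⟨x,y⟩ = π/2. Moreover the infimum is attained at the soul point s = (u+v)/‖u+v‖, i.e., arccos⟨s,y⟩ ≤ π/2 for all y ∈ L, and there exists y ∈ L with ⟨s,y⟩ = 0. -/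
open scoped RealInnerProductSpace

/-- The Alexandrov lens `L = {x ∈ Sⁿ : ⟨x,u⟩ ≥ 0, ⟨x,v⟩ ≥ 0}` determined by unit
vectors `u ≠ -v` in `ℝ^{n+1}` (`n ≥ 2`) has maximal radius `π/2`, the infimum being
attained at the soul point `s = (u+v)/‖u+v‖`. -/
theorem lens_radius_eq_half_pi (n : ℕ) (hn : 2 ≤ n)
    (u v : EuclideanSpace ℝ (Fin (n + 1))) (hu : ‖u‖ = 1) (hv : ‖v‖ = 1)
    (huv : v ≠ -u)
    (L : Set (EuclideanSpace ℝ (Fin (n + 1))))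
    (hL : L = {x : EuclideanSpace ℝ (Fin (n + 1)) | ‖x‖ = 1 ∧ 0 ≤ ⟪x, u⟫ ∧ 0 ≤ ⟪x, v⟫})
    (s : EuclideanSpace ℝ (Fin (n + 1))) (hs : s = (‖u + v‖)⁻¹ • (u + v)) :
    (⨅ x : L, ⨆ y : L, Real.arccos ⟪(x : EuclideanSpace ℝ (Fin (n + 1))),
        (y : EuclideanSpace ℝ (Fin (n + 1)))⟫) = Real.pi / 2 ∧
      (∀ y ∈ L, Real.arccos ⟪s, y⟫ ≤ Real.pi / 2) ∧
      (∃ y ∈ L, ⟪s, y⟫ = 0) := by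
  have hne : u + v ≠ 0 := by
    intro h
    exact huv (eq_neg_of_add_eq_zero_right h)
  have hnuv : (0:ℝ) < ‖u + v‖ := norm_pos_iff.2 hne
  have hinv : (0:ℝ) ≤ ‖u + v‖⁻¹ := inv_nonneg.2 hnuv.le
  have hsnorm : ‖s‖ = 1 := by
    rw [hs, norm_smul, norm_inv, norm_norm]
    field_simp
  have hvu : |⟪v, u⟫| ≤ 1 := by
    have := abs_real_inner_le_norm v u
    simpa [hu, hv] using this
  have hvu1 := (abs_le.1 hvu).1
  have hinner : ∀ y : EuclideanSpace ℝ (Fin (n + 1)),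
      ⟪s, y⟫ = ‖u + v‖⁻¹ * (⟪u, y⟫ + ⟪v, y⟫) := by
    intro y
    rw [hs, real_inner_smul_left, inner_add_left]
  have huu : ⟪u, u⟫ = 1 := by
    rw [real_inner_self_eq_norm_sq, hu]; norm_num
  have hvv : ⟪v, v⟫ = 1 := by
    rw [real_inner_self_eq_norm_sq, hv]; norm_num
  have hsu : 0 ≤ ⟪s, u⟫ := by
    rw [hinner, huu]
    exact mul_nonneg hinv (by linarith)
  have hsv : 0 ≤ ⟪s, v⟫ := by
    rw [hinner, hvv]
    have : ⟪u, v⟫ = ⟪v, u⟫ := real_inner_comm v u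
    exact mul_nonneg hinv (by linarith)
  have hsL : s ∈ L := by
    rw [hL]; exact ⟨hsnorm, hsu, hsv⟩
  -- a unit vector orthogonal to both u and v
  obtain ⟨w, hw1, hwu, hwv⟩ : ∃ w : EuclideanSpace ℝ (Fin (n + 1)),
      ‖w‖ = 1 ∧ ⟪w, u⟫ = 0 ∧ ⟪w, v⟫ = 0 := by
    classical
    set K : Submodule ℝ (EuclideanSpace ℝ (Fin (n + 1))) :=
      Submodule.span ℝ (({u, v} : Finset (EuclideanSpace ℝ (Fin (n + 1)))) :
        Set (EuclideanSpace ℝ (Fin (n + 1)))) with hK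
    have hKfin : Module.finrank ℝ K ≤ 2 := by
      refine (finrank_span_finset_le_card _).trans ?_
      exact (Finset.card_insert_le _ _).trans (by simp)
    have hdim : Module.finrank ℝ (EuclideanSpace ℝ (Fin (n + 1))) = n + 1 := by
      simp
    have horth : Kᗮ ≠ ⊥ := by
      intro hbot
      have h2 := Submodule.finrank_add_finrank_orthogonal K
      rw [hbot] at h2
      simp only [finrank_bot, add_zero, hdim] at h2
      omega
    obtain ⟨z, hzK, hz0⟩ := Submodule.exists_mem_ne_zero_of_ne_bot horth
    have hzu : ⟪u, z⟫ = 0 :=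
      (Submodule.mem_orthogonal K z).1 hzK u (Submodule.subset_span (by simp))
    have hzv : ⟪v, z⟫ = 0 :=
      (Submodule.mem_orthogonal K z).1 hzK v (Submodule.subset_span (by simp))
    refine ⟨(‖z‖)⁻¹ • z, ?_, ?_, ?_⟩
    · rw [norm_smul, norm_inv, norm_norm]
      field_simp [norm_ne_zero_iff.2 hz0]
    · rw [real_inner_smul_left, real_inner_comm u z, hzu, mul_zero]
    · rw [real_inner_smul_left, real_inner_comm v z, hzv, mul_zero]
  have hwL : w ∈ L := by
    rw [hL]; exact ⟨hw1, le_of_eq hwu.symm, le_of_eq hwv.symm⟩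
  have hnwL : -w ∈ L := by
    rw [hL]
    refine ⟨by simpa using hw1, ?_, ?_⟩ <;> simp [inner_neg_left, hwu, hwv]
  -- part 2
  have part2 : ∀ y ∈ L, Real.arccos ⟪s, y⟫ ≤ Real.pi / 2 := by
    intro y hy
    rw [hL] at hy
    obtain ⟨hy1, hyu, hyv⟩ := hy
    rw [Real.arccos_le_pi_div_two, hinner]
    have h1 : ⟪u, y⟫ = ⟪y, u⟫ := real_inner_comm y u
    have h2 : ⟪v, y⟫ = ⟪y, v⟫ := real_inner_comm y v
    exact mul_nonneg hinv (by linarith)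
  have hsw : ⟪s, w⟫ = 0 := by
    rw [hinner, real_inner_comm w u, real_inner_comm w v, hwu, hwv]
    ring
  refine ⟨?_, part2, ⟨w, hwL, hsw⟩⟩
  -- part 1
  haveI : Nonempty L := ⟨⟨s, hsL⟩⟩
  have hbdd : ∀ x : L, BddAbove (Set.range fun y : L =>
      Real.arccos ⟪(x : EuclideanSpace ℝ (Fin (n + 1))), (y : EuclideanSpace ℝ (Fin (n + 1)))⟫) := by
    intro x
    exact ⟨Real.pi, by rintro _ ⟨y, rfl⟩; exact Real.arccos_le_pi _⟩
  apply le_antisymm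
  · -- inf ≤ value at s ≤ π/2
    have h1 : (⨆ y : L, Real.arccos ⟪((⟨s, hsL⟩ : L) : EuclideanSpace ℝ (Fin (n + 1))),
        (y : EuclideanSpace ℝ (Fin (n + 1)))⟫) ≤ Real.pi / 2 :=
      ciSup_le fun y => part2 y y.2
    refine le_trans (ciInf_le ?_ (⟨s, hsL⟩ : L)) h1
    refine ⟨0, ?_⟩
    rintro _ ⟨x, rfl⟩
    exact le_ciSup_of_le (hbdd x) x (Real.arccos_nonneg _)
  · refine le_ciInf fun x => ?_
    rcases le_or_gt ⟪(x : EuclideanSpace ℝ (Fin (n + 1))), w⟫ 0 with h | h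
    · refine le_trans ?_ (le_ciSup (hbdd x) (⟨w, hwL⟩ : L))
      rw [Real.arccos_eq_pi_div_two_sub_arcsin]
      have := Real.arcsin_nonpos.2 h
      linarith
    · refine le_trans ?_ (le_ciSup (hbdd x) (⟨-w, hnwL⟩ : L))
      rw [Real.arccos_eq_pi_div_two_sub_arcsin]
      have h' : ⟪(x : EuclideanSpace ℝ (Fin (n + 1))), -w⟫ ≤ 0 := by
        rw [inner_neg_right]; simpa using h.le
      have := Real.arcsin_nonpos.2 h'
      linarith
end

section
/- Let n ≥ 1 and let u, v be unit vectors in Euclidean space ℝ^{n+1} with v ≠ −u. Let B = {x ∈ ℝ^{n+1} : ‖x‖ = 1, ⟨x,u⟩ = 0, ⟨x,v⟩ ≥ 0} ∪ {x ∈ ℝ^{n+1} : ‖x‖ = 1, ⟨x,v⟩ = 0, ⟨x,u⟩ ≥ 0} (the boundary of the Alexandrov lens determined by u and v). Then the (n−1)-dimensional Hausdorff measure of B equals the (n−1)-dimensional Hausdorff measure of the unit sphere S^{n−1} ⊆ ℝ^n: the boundary of a lens has the maximal possible boundary volume, vol S^{n−1}(1). -/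
open scoped RealInnerProductSpace
open MeasureTheory

open Metric Module


lemma euclid_sphere_hausdorff_zero (m : ℕ) :
    μH[(m : ℝ)] (Metric.sphere (0 : EuclideanSpace ℝ (Fin m)) 1) = 0 := by
  rcases Nat.eq_zero_or_pos m with hm | hm
  · subst hm
    have h : (Metric.sphere (0 : EuclideanSpace ℝ (Fin 0)) 1) = ∅ := by
      ext x
      simp [Subsingleton.elim x 0]
    simp [h]
  · haveI : Nontrivial (EuclideanSpace ℝ (Fin m)) := by
      have : 0 < Module.finrank ℝ (EuclideanSpace ℝ (Fin m)) := by
        simpa [finrank_euclideanSpace_fin] using hm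
      exact Module.nontrivial_of_finrank_pos this
    set e := EuclideanSpace.equiv (Fin m) ℝ with he
    set s := Metric.sphere (0 : EuclideanSpace ℝ (Fin m)) 1 with hs
    have h1 : s = (e.symm : (Fin m → ℝ) → EuclideanSpace ℝ (Fin m)) '' ((e : EuclideanSpace ℝ (Fin m) → (Fin m → ℝ)) '' s) := by
      rw [← Set.image_comp]; simp
    have hd : (0:ℝ) ≤ (m:ℝ) := by positivity
    have h2 := ((e.symm : (Fin m → ℝ) →L[ℝ] EuclideanSpace ℝ (Fin m)).lipschitz).hausdorffMeasure_image_le hd ((e : EuclideanSpace ℝ (Fin m) → (Fin m → ℝ)) '' s)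
    have h3 : μH[(m : ℝ)] ((e : EuclideanSpace ℝ (Fin m) → (Fin m → ℝ)) '' s) = volume ((e : EuclideanSpace ℝ (Fin m) → (Fin m → ℝ)) '' s) := by
      rw [← hausdorffMeasure_pi_real]
      simp
    have h4 : volume ((e : EuclideanSpace ℝ (Fin m) → (Fin m → ℝ)) '' s) = volume s := by
      have hme : ((e : EuclideanSpace ℝ (Fin m) → (Fin m → ℝ)) '' s) = (MeasurableEquiv.toLp 2 (Fin m → ℝ)) ⁻¹' s := by
        ext x
        simp only [Set.mem_image, Set.mem_preimage]
        constructor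
        · rintro ⟨y, hy, rfl⟩
          have : (MeasurableEquiv.toLp 2 (Fin m → ℝ)) (e y) = y := rfl
          rw [this]; exact hy
        · intro hx
          exact ⟨(MeasurableEquiv.toLp 2 (Fin m → ℝ)) x, hx, rfl⟩
      rw [hme]
      exact (MeasurePreserving.symm _ (EuclideanSpace.volume_preserving_symm_measurableEquiv_toLp (Fin m))).measure_preimage (isClosed_sphere.measurableSet).nullMeasurableSet
    have h5 : volume s = 0 := Measure.addHaar_sphere volume 0 1
    rw [h1]
    refine le_antisymm ?_ zero_le
    calc μH[(m:ℝ)] _ ≤ _ := h2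
    _ = 0 := by rw [h3, h4, h5, mul_zero]
lemma hausdorff_subspace_sphere {E : Type*} [NormedAddCommGroup E] [InnerProductSpace ℝ E]
    [FiniteDimensional ℝ E] [MeasurableSpace E] [BorelSpace E]
    (K : Submodule ℝ E) {d : ℝ} (hd : 0 ≤ d) :
    μH[d] {x : E | ‖x‖ = 1 ∧ x ∈ K} =
      μH[d] (Metric.sphere (0 : EuclideanSpace ℝ (Fin (Module.finrank ℝ K))) 1) := by
  have hset : {x : E | ‖x‖ = 1 ∧ x ∈ K} =
      (Subtype.val : K → E) '' (Metric.sphere (0 : K) 1) := by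
    ext x
    simp only [Set.mem_setOf_eq, Set.mem_image]
    constructor
    · rintro ⟨h1, h2⟩
      exact ⟨⟨x, h2⟩, by simpa [mem_sphere_zero_iff_norm] using h1, rfl⟩
    · rintro ⟨y, hy, rfl⟩
      exact ⟨by simpa [mem_sphere_zero_iff_norm] using hy, y.2⟩
  rw [hset, isometry_subtype_coe.hausdorffMeasure_image (Or.inl hd)]
  set f := (stdOrthonormalBasis ℝ K).repr
  have himg : (f : K → EuclideanSpace ℝ (Fin (Module.finrank ℝ K))) '' (Metric.sphere 0 1) =
      Metric.sphere 0 1 := by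
    have := f.toIsometryEquiv.image_sphere 0 1
    simpa using this
  rw [← himg, f.isometry.hausdorffMeasure_image (Or.inr f.surjective)]


lemma great_sphere_measure (n : ℕ) (hn : 1 ≤ n) (u : EuclideanSpace ℝ (Fin (n+1))) (hu : u ≠ 0) :
    μH[(n:ℝ)-1] {x : EuclideanSpace ℝ (Fin (n+1)) | ‖x‖ = 1 ∧ ⟪x, u⟫ = 0} =
    μH[(n:ℝ)-1] (Metric.sphere (0 : EuclideanSpace ℝ (Fin n)) 1) := by
  have hd : (0:ℝ) ≤ (n:ℝ)-1 := by
    rw [sub_nonneg]; exact_mod_cast hn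
  have hset : {x : EuclideanSpace ℝ (Fin (n+1)) | ‖x‖ = 1 ∧ ⟪x, u⟫ = 0} =
      {x : EuclideanSpace ℝ (Fin (n+1)) | ‖x‖ = 1 ∧ x ∈ (ℝ ∙ u)ᗮ} := by
    ext x
    rw [Set.mem_setOf_eq, Set.mem_setOf_eq, Submodule.mem_orthogonal_singleton_iff_inner_right,
      real_inner_comm]
  have hfr : Module.finrank ℝ ((ℝ ∙ u)ᗮ : Submodule ℝ (EuclideanSpace ℝ (Fin (n+1)))) = n := by
    have h1 := Submodule.finrank_add_finrank_orthogonal (K := (ℝ ∙ u))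
    rw [finrank_span_singleton hu, finrank_euclideanSpace_fin] at h1
    omega
  have h := hausdorff_subspace_sphere ((ℝ ∙ u)ᗮ : Submodule ℝ (EuclideanSpace ℝ (Fin (n+1)))) hd
  rw [hfr] at h
  rw [hset]; exact h

lemma codim2_zero (n : ℕ) (hn : 1 ≤ n) (u w : EuclideanSpace ℝ (Fin (n+1)))
    (hind : LinearIndependent ℝ ![u, w]) :
    μH[(n:ℝ)-1] {x : EuclideanSpace ℝ (Fin (n+1)) | ‖x‖ = 1 ∧ ⟪x, u⟫ = 0 ∧ ⟪x, w⟫ = 0} = 0 := by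
  have hd : (0:ℝ) ≤ (n:ℝ)-1 := by
    rw [sub_nonneg]; exact_mod_cast hn
  set K : Submodule ℝ (EuclideanSpace ℝ (Fin (n+1))) := (Submodule.span ℝ {u, w})ᗮ with hK
  have hsp : Submodule.span ℝ ({u, w} : Set (EuclideanSpace ℝ (Fin (n+1)))) = (ℝ ∙ u) ⊔ (ℝ ∙ w) := by
    exact Submodule.span_insert u {w}
  have hset : {x : EuclideanSpace ℝ (Fin (n+1)) | ‖x‖ = 1 ∧ ⟪x, u⟫ = 0 ∧ ⟪x, w⟫ = 0} =
      {x : EuclideanSpace ℝ (Fin (n+1)) | ‖x‖ = 1 ∧ x ∈ K} := by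
    ext x
    rw [Set.mem_setOf_eq, Set.mem_setOf_eq, hK, hsp, ← Submodule.inf_orthogonal,
      Submodule.mem_inf, Submodule.mem_orthogonal_singleton_iff_inner_right,
      Submodule.mem_orthogonal_singleton_iff_inner_right, real_inner_comm x u, real_inner_comm x w]
  have hfr : Module.finrank ℝ K = n - 1 := by
    have h2 : Module.finrank ℝ (Submodule.span ℝ ({u, w} : Set (EuclideanSpace ℝ (Fin (n+1))))) = 2 := by
      have hr : Set.range ![u, w] = {u, w} := Matrix.range_cons_cons_empty u w ![]
      rw [← hr, finrank_span_eq_card hind]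
      simp
    have h1 := Submodule.finrank_add_finrank_orthogonal
      (K := Submodule.span ℝ ({u, w} : Set (EuclideanSpace ℝ (Fin (n+1)))))
    rw [h2, finrank_euclideanSpace_fin, ← hK] at h1
    omega
  rw [hset, hausdorff_subspace_sphere K hd, hfr]
  have h := euclid_sphere_hausdorff_zero (n-1)
  have hc : ((n - 1 : ℕ) : ℝ) = (n:ℝ) - 1 := by
    have := Nat.cast_sub hn (R := ℝ); simpa using this
  rw [hc] at h
  exact h


lemma pair_indep (n : ℕ) (u w : EuclideanSpace ℝ (Fin (n+1)))
    (hu : ‖u‖ = 1) (hw : ‖w‖ = 1) (huw : ⟪u, w⟫ = 0) : LinearIndependent ℝ ![u, w] := by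
  rw [linearIndependent_fin2]
  simp only [Matrix.cons_val_one, Matrix.head_cons, Matrix.cons_val_zero]
  constructor
  · intro h; rw [h] at hw; simp at hw
  · intro a h
    have h2 : ⟪u, w⟫ = a * ‖w‖ ^ 2 := by
      rw [← h, real_inner_smul_left, real_inner_self_eq_norm_sq]
    rw [huw, hw] at h2
    have ha : a = 0 := by simpa using h2.symm
    rw [ha, zero_smul] at h
    rw [← h] at hu
    simp at hu

lemma half_great_sphere (n : ℕ) (hn : 1 ≤ n) (u w : EuclideanSpace ℝ (Fin (n+1)))
    (hu : ‖u‖ = 1) (hw : ‖w‖ = 1) (huw : ⟪u, w⟫ = 0) :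
    2 * μH[(n:ℝ)-1] {x : EuclideanSpace ℝ (Fin (n+1)) | ‖x‖ = 1 ∧ ⟪x, u⟫ = 0 ∧ 0 ≤ ⟪x, w⟫} =
      μH[(n:ℝ)-1] {x : EuclideanSpace ℝ (Fin (n+1)) | ‖x‖ = 1 ∧ ⟪x, u⟫ = 0} := by
  have hd : (0:ℝ) ≤ (n:ℝ)-1 := by rw [sub_nonneg]; exact_mod_cast hn
  set K : Submodule ℝ (EuclideanSpace ℝ (Fin (n+1))) := (ℝ ∙ w)ᗮ with hKdef
  set R := K.reflection with hRdef
  have humem : u ∈ K := Submodule.mem_orthogonal_singleton_iff_inner_right.mpr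
    (by rw [real_inner_comm]; exact huw)
  have hproj0 : ∀ x : EuclideanSpace ℝ (Fin (n+1)), ⟪K.starProjection x, w⟫ = 0 := by
    intro x
    have hm := (K.orthogonalProjectionOnto x).2
    have : K.starProjection x ∈ (ℝ ∙ w)ᗮ := hm
    rw [real_inner_comm]
    exact Submodule.mem_orthogonal_singleton_iff_inner_right.mp this
  have hRw : ∀ x : EuclideanSpace ℝ (Fin (n+1)), ⟪R x, w⟫ = -⟪x, w⟫ := by
    intro x
    rw [hRdef, Submodule.reflection_apply, inner_sub_left, two_smul, inner_add_left, hproj0]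
    ring
  have hRu : ∀ x : EuclideanSpace ℝ (Fin (n+1)), ⟪R x, u⟫ = ⟪x, u⟫ := by
    intro x
    have h1 : ⟪K.starProjection x, u⟫ = ⟪x, u⟫ := by
      rw [Submodule.inner_starProjection_left_eq_right, Submodule.starProjection_eq_self_iff.mpr humem]
    rw [hRdef, Submodule.reflection_apply, inner_sub_left, two_smul, inner_add_left, h1]
    ring
  set A := {x : EuclideanSpace ℝ (Fin (n+1)) | ‖x‖ = 1 ∧ ⟪x, u⟫ = 0 ∧ 0 ≤ ⟪x, w⟫} with hA
  set A' := {x : EuclideanSpace ℝ (Fin (n+1)) | ‖x‖ = 1 ∧ ⟪x, u⟫ = 0 ∧ ⟪x, w⟫ ≤ 0} with hA'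
  have himg : (R : EuclideanSpace ℝ (Fin (n+1)) → EuclideanSpace ℝ (Fin (n+1))) '' A' = A := by
    ext x
    constructor
    · rintro ⟨y, ⟨hy1, hy2, hy3⟩, rfl⟩
      refine ⟨by rw [R.norm_map]; exact hy1, by rw [hRu]; exact hy2, by rw [hRw]; linarith⟩
    · rintro ⟨h1, h2, h3⟩
      refine ⟨R x, ⟨?_, ?_, ?_⟩, ?_⟩
      · rw [R.norm_map]; exact h1
      · rw [hRu]; exact h2
      · rw [hRw]; linarith
      · have := K.reflection_involutive x
        exact this
  have hmu' : μH[(n:ℝ)-1] A' = μH[(n:ℝ)-1] A := by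
    rw [← himg, R.isometry.hausdorffMeasure_image (Or.inl hd)]
  have hmeasA : MeasurableSet A := by
    apply IsClosed.measurableSet
    have hc1 : IsClosed {x : EuclideanSpace ℝ (Fin (n+1)) | ‖x‖ = 1} := isClosed_eq (continuous_norm) continuous_const
    have hc2 : IsClosed {x : EuclideanSpace ℝ (Fin (n+1)) | ⟪x, u⟫ = 0} :=
      isClosed_eq (Continuous.inner continuous_id continuous_const) continuous_const
    have hc3 : IsClosed {x : EuclideanSpace ℝ (Fin (n+1)) | 0 ≤ ⟪x, w⟫} :=
      isClosed_le continuous_const (Continuous.inner continuous_id continuous_const)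
    exact (hc1.inter (hc2.inter hc3))
  have hunion : A ∪ A' = {x : EuclideanSpace ℝ (Fin (n+1)) | ‖x‖ = 1 ∧ ⟪x, u⟫ = 0} := by
    ext x
    simp only [hA, hA', Set.mem_union, Set.mem_setOf_eq]
    constructor
    · rintro (⟨h1, h2, _⟩ | ⟨h1, h2, _⟩) <;> exact ⟨h1, h2⟩
    · rintro ⟨h1, h2⟩
      rcases le_total 0 ⟪x, w⟫ with h | h
      · exact Or.inl ⟨h1, h2, h⟩
      · exact Or.inr ⟨h1, h2, h⟩
  have hinter : A ∩ A' = {x : EuclideanSpace ℝ (Fin (n+1)) | ‖x‖ = 1 ∧ ⟪x, u⟫ = 0 ∧ ⟪x, w⟫ = 0} := by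
    ext x
    simp only [hA, hA', Set.mem_inter_iff, Set.mem_setOf_eq]
    constructor
    · rintro ⟨⟨h1, h2, h3⟩, ⟨_, _, h6⟩⟩
      exact ⟨h1, h2, le_antisymm h6 h3⟩
    · rintro ⟨h1, h2, h3⟩
      exact ⟨⟨h1, h2, h3.ge⟩, ⟨h1, h2, h3.le⟩⟩
  have hinter0 : μH[(n:ℝ)-1] (A ∩ A') = 0 := by
    rw [hinter]
    exact codim2_zero n hn u w (pair_indep n u w hu hw huw)
  have key := measure_union_add_inter (μ := μH[(n:ℝ)-1]) A' hmeasA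
  rw [Set.union_comm, Set.inter_comm] at key
  rw [hunion, hinter0] at key
  rw [hmu'] at key
  rw [two_mul]
  rw [add_zero] at key
  exact key.symm

lemma proj_w (n : ℕ) (u v : EuclideanSpace ℝ (Fin (n+1))) (hu : ‖u‖ = 1) (hv : ‖v‖ = 1)
    (hvu : v ≠ u) (hvu' : v ≠ -u) :
    ∃ w : EuclideanSpace ℝ (Fin (n+1)), ‖w‖ = 1 ∧ ⟪u, w⟫ = 0 ∧
      {x : EuclideanSpace ℝ (Fin (n+1)) | ‖x‖ = 1 ∧ ⟪x, u⟫ = 0 ∧ 0 ≤ ⟪x, v⟫} =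
      {x : EuclideanSpace ℝ (Fin (n+1)) | ‖x‖ = 1 ∧ ⟪x, u⟫ = 0 ∧ 0 ≤ ⟪x, w⟫} := by
  set c : ℝ := ⟪v, u⟫ with hc
  set v' : EuclideanSpace ℝ (Fin (n+1)) := v - c • u with hv'
  have hv'0 : v' ≠ 0 := by
    intro h
    have hveq : v = c • u := by
      have := sub_eq_zero.mp h
      exact this
    have hnc : |c| = 1 := by
      have : ‖v‖ = ‖c • u‖ := by rw [← hveq]
      rw [norm_smul, hu, mul_one, hv] at this
      exact this.symm
    rcases abs_eq (by norm_num : (0:ℝ) ≤ 1) |>.mp hnc with h1 | h1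
    · rw [h1, one_smul] at hveq; exact hvu hveq
    · rw [h1, neg_one_smul] at hveq; exact hvu' hveq
  have hnv' : 0 < ‖v'‖ := norm_pos_iff.mpr hv'0
  refine ⟨‖v'‖⁻¹ • v', ?_, ?_, ?_⟩
  · rw [norm_smul, norm_inv, norm_norm, inv_mul_cancel₀ hnv'.ne']
  · rw [real_inner_smul_right, hv', inner_sub_right, real_inner_smul_right,
      real_inner_self_eq_norm_sq, hu, hc, real_inner_comm u v]
    ring
  · ext x
    simp only [Set.mem_setOf_eq]
    constructor
    · rintro ⟨h1, h2, h3⟩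
      refine ⟨h1, h2, ?_⟩
      have hxv : ⟪x, v'⟫ = ⟪x, v⟫ := by
        rw [hv', inner_sub_right, real_inner_smul_right, h2]; ring
      rw [real_inner_smul_right, hxv]
      positivity
    · rintro ⟨h1, h2, h3⟩
      refine ⟨h1, h2, ?_⟩
      rw [real_inner_smul_right] at h3
      have hxv : ⟪x, v'⟫ = ⟪x, v⟫ := by
        rw [hv', inner_sub_right, real_inner_smul_right, h2]; ring
      rw [hxv] at h3
      nlinarith [hnv', inv_pos.mpr hnv']
lemma pair_indep2 (n : ℕ) (u v : EuclideanSpace ℝ (Fin (n+1)))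
    (hu : ‖u‖ = 1) (hv : ‖v‖ = 1) (hvu : v ≠ u) (hvu' : v ≠ -u) :
    LinearIndependent ℝ ![u, v] := by
  rw [linearIndependent_fin2]
  simp only [Matrix.cons_val_one, Matrix.head_cons, Matrix.cons_val_zero]
  refine ⟨by intro h; rw [h] at hv; simp at hv, ?_⟩
  intro a h
  have hna : |a| = 1 := by
    have h2 : ‖u‖ = ‖a • v‖ := by rw [← h]
    rw [norm_smul, hv, mul_one, hu] at h2
    exact h2.symm
  rcases (abs_eq (by norm_num : (0:ℝ) ≤ 1)).mp hna with h1 | h1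
  · rw [h1, one_smul] at h; exact hvu h
  · rw [h1, neg_one_smul] at h
    apply hvu'
    rw [← h, neg_neg]

/-- The boundary of an Alexandrov lens, the union of the two half-great-spheres
`{x ∈ Sⁿ : ⟨x,u⟩ = 0, ⟨x,v⟩ ≥ 0}` and `{x ∈ Sⁿ : ⟨x,v⟩ = 0, ⟨x,u⟩ ≥ 0}` determined by
unit vectors `u ≠ -v` in `ℝ^{n+1}`, has `(n-1)`-dimensional Hausdorff measure equal to
that of the unit sphere `S^{n-1} ⊆ ℝⁿ`. -/
theorem lens_boundary_maximal_volume (n : ℕ) (hn : 1 ≤ n)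
    (u v : EuclideanSpace ℝ (Fin (n + 1))) (hu : ‖u‖ = 1) (hv : ‖v‖ = 1)
    (huv : v ≠ -u) :
    μH[(n : ℝ) - 1]
        ({x : EuclideanSpace ℝ (Fin (n + 1)) | ‖x‖ = 1 ∧ ⟪x, u⟫ = 0 ∧ 0 ≤ ⟪x, v⟫} ∪
          {x : EuclideanSpace ℝ (Fin (n + 1)) | ‖x‖ = 1 ∧ ⟪x, v⟫ = 0 ∧ 0 ≤ ⟪x, u⟫}) =
      μH[(n : ℝ) - 1] (Metric.sphere (0 : EuclideanSpace ℝ (Fin n)) 1) := by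
  have hd : (0:ℝ) ≤ (n:ℝ)-1 := by rw [sub_nonneg]; exact_mod_cast hn
  have hu0 : u ≠ 0 := by intro h; rw [h] at hu; simp at hu
  have hv0 : v ≠ 0 := by intro h; rw [h] at hv; simp at hv
  by_cases hvu : v = u
  · subst hvu
    have hset : ({x : EuclideanSpace ℝ (Fin (n + 1)) | ‖x‖ = 1 ∧ ⟪x, v⟫ = 0 ∧ 0 ≤ ⟪x, v⟫} ∪
          {x : EuclideanSpace ℝ (Fin (n + 1)) | ‖x‖ = 1 ∧ ⟪x, v⟫ = 0 ∧ 0 ≤ ⟪x, v⟫}) =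
        {x : EuclideanSpace ℝ (Fin (n + 1)) | ‖x‖ = 1 ∧ ⟪x, v⟫ = 0} := by
      ext x
      simp only [Set.mem_union, Set.mem_setOf_eq]
      constructor
      · rintro (⟨h1, h2, _⟩ | ⟨h1, h2, _⟩) <;> exact ⟨h1, h2⟩
      · rintro ⟨h1, h2⟩; exact Or.inl ⟨h1, h2, h2.ge⟩
    rw [hset]
    exact great_sphere_measure n hn v hv0
  · have huv' : u ≠ v := fun h => hvu h.symm
    have hunv : u ≠ -v := by
      intro h
      apply huv
      rw [h, neg_neg]
    obtain ⟨w₁, hw₁n, hw₁o, hw₁set⟩ := proj_w n u v hu hv hvu huv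
    obtain ⟨w₂, hw₂n, hw₂o, hw₂set⟩ := proj_w n v u hv hu huv' hunv
    set A := {x : EuclideanSpace ℝ (Fin (n + 1)) | ‖x‖ = 1 ∧ ⟪x, u⟫ = 0 ∧ 0 ≤ ⟪x, v⟫} with hA
    set B := {x : EuclideanSpace ℝ (Fin (n + 1)) | ‖x‖ = 1 ∧ ⟪x, v⟫ = 0 ∧ 0 ≤ ⟪x, u⟫} with hB
    set m := μH[(n : ℝ) - 1] (Metric.sphere (0 : EuclideanSpace ℝ (Fin n)) 1) with hm
    have h2A : 2 * μH[(n:ℝ)-1] A = m := by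
      rw [hw₁set, half_great_sphere n hn u w₁ hu hw₁n hw₁o]
      exact great_sphere_measure n hn u hu0
    have h2B : 2 * μH[(n:ℝ)-1] B = m := by
      rw [hw₂set, half_great_sphere n hn v w₂ hv hw₂n hw₂o]
      exact great_sphere_measure n hn v hv0
    have hmeasB : MeasurableSet B := by
      apply IsClosed.measurableSet
      have hc1 : IsClosed {x : EuclideanSpace ℝ (Fin (n + 1)) | ‖x‖ = 1} :=
        isClosed_eq continuous_norm continuous_const
      have hc2 : IsClosed {x : EuclideanSpace ℝ (Fin (n + 1)) | ⟪x, v⟫ = 0} :=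
        isClosed_eq (Continuous.inner continuous_id continuous_const) continuous_const
      have hc3 : IsClosed {x : EuclideanSpace ℝ (Fin (n + 1)) | 0 ≤ ⟪x, u⟫} :=
        isClosed_le continuous_const (Continuous.inner continuous_id continuous_const)
      exact hc1.inter (hc2.inter hc3)
    have hABz : μH[(n:ℝ)-1] (A ∩ B) = 0 := by
      refine measure_mono_null ?_ (codim2_zero n hn u v (pair_indep2 n u v hu hv hvu huv))
      rintro x ⟨⟨h1, h2, _⟩, ⟨_, h5, _⟩⟩
      exact ⟨h1, h2, h5⟩
    have key := measure_union_add_inter (μ := μH[(n:ℝ)-1]) A hmeasB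
    rw [hABz, add_zero] at key
    have hAm : μH[(n:ℝ)-1] A = m / 2 :=
      (ENNReal.eq_div_iff two_ne_zero ENNReal.ofNat_ne_top).mpr h2A
    have hBm : μH[(n:ℝ)-1] B = m / 2 :=
      (ENNReal.eq_div_iff two_ne_zero ENNReal.ofNat_ne_top).mpr h2B
    rw [key, hAm, hBm, ENNReal.add_halves]
end

section
/- Let 0 < r₀ < π/2 and b ≥ 0, and let f : ℝ → ℝ be twice continuously differentiable on [0,b] with: f(t) ≥ 0 for all t ∈ [0,b]; f''(t) + f(t) ≤ −cot r₀ for all t ∈ [0,b]; f(0) ≤ tan(r₀/2); and f'(0) ≤ 0. Then b ≤ r₀. -/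
open Set Real

/-- Curvature `k = 1` radius bound: if `f ≥ 0` and `f'' + f ≤ -cot r₀` on `[0,b]`,
`f(0) ≤ tan (r₀/2)`, and `f'(0) ≤ 0`, where `0 < r₀ < π/2`, then `b ≤ r₀`. -/
theorem radius_bound_curvature_one (r₀ : ℝ) (hr₀ : 0 < r₀) (hr₀' : r₀ < π / 2)
    (b : ℝ) (hb : 0 ≤ b)
    (f f' f'' : ℝ → ℝ)
    (hf1 : ∀ t ∈ Icc (0 : ℝ) b, HasDerivWithinAt f (f' t) (Icc 0 b) t)
    (hf2 : ∀ t ∈ Icc (0 : ℝ) b, HasDerivWithinAt f' (f'' t) (Icc 0 b) t)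
    (hfc : ContinuousOn f'' (Icc 0 b))
    (hpos : ∀ t ∈ Icc (0 : ℝ) b, 0 ≤ f t)
    (hode : ∀ t ∈ Icc (0 : ℝ) b, f'' t + f t ≤ -(Real.cos r₀ / Real.sin r₀))
    (h0 : f 0 ≤ Real.tan (r₀ / 2)) (h'0 : f' 0 ≤ 0) :
    b ≤ r₀ := by
  by_contra hcon
  push_neg at hcon
  have hπ : (0 : ℝ) < π := Real.pi_pos
  have hsin : 0 < Real.sin r₀ := Real.sin_pos_of_pos_of_lt_pi hr₀ (by linarith)
  set l : ℝ := Real.cos r₀ / Real.sin r₀ with hl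
  set c : ℝ := 1 / Real.sin r₀ with hc
  set T : ℝ := min b ((r₀ + π / 2) / 2) with hT
  have hTb : T ≤ b := min_le_left _ _
  have hr₀T : r₀ < T := lt_min hcon (by linarith)
  have hTπ : T < π / 2 := (min_le_right _ _).trans_lt (by linarith)
  have hT0 : 0 < T := hr₀.trans hr₀T
  have hsub : Icc (0 : ℝ) T ⊆ Icc 0 b := Icc_subset_Icc le_rfl hTb
  have hcosp : ∀ t ∈ Icc (0 : ℝ) T, 0 < Real.cos t := by
    intro t ht
    exact Real.cos_pos_of_mem_Ioo ⟨by linarith [ht.1], lt_of_le_of_lt ht.2 hTπ⟩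
  -- the auxiliary function V = w' cos + w sin
  set V : ℝ → ℝ := fun t =>
    (f' t + c * Real.sin t) * Real.cos t + (f t - (c * Real.cos t - l)) * Real.sin t with hV
  have hVderiv : ∀ t ∈ Icc (0 : ℝ) T,
      HasDerivWithinAt V ((f'' t + f t + l) * Real.cos t) (Icc 0 T) t := by
    intro t ht
    have h1 := (hf1 t (hsub ht)).mono hsub
    have h2 := (hf2 t (hsub ht)).mono hsub
    have hs : HasDerivWithinAt Real.sin (Real.cos t) (Icc 0 T) t :=
      (Real.hasDerivAt_sin t).hasDerivWithinAt
    have hcs : HasDerivWithinAt Real.cos (-Real.sin t) (Icc 0 T) t :=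
      (Real.hasDerivAt_cos t).hasDerivWithinAt
    have := ((h2.add (hs.const_mul c)).mul hcs).add
      ((h1.sub ((hcs.const_mul c).sub_const l)).mul hs)
    refine this.congr_deriv ?_
    have := Real.sin_sq_add_cos_sq t
    simp only [Pi.add_apply, Pi.sub_apply]
    nlinarith [this]
  have hVanti : AntitoneOn V (Icc 0 T) := by
    apply antitoneOn_of_hasDerivWithinAt_nonpos (convex_Icc 0 T)
    · exact fun t ht => (hVderiv t ht).continuousWithinAt
    · intro x hx
      exact (hVderiv x (interior_subset hx)).mono interior_subset
    · intro x hx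
      rw [interior_Icc] at hx
      have hxI : x ∈ Icc (0 : ℝ) T := Ioo_subset_Icc_self hx
      have h1 : f'' x + f x + l ≤ 0 := by
        have := hode x (hsub hxI)
        linarith
      have h2 : 0 ≤ Real.cos x := (hcosp x hxI).le
      exact mul_nonpos_of_nonpos_of_nonneg h1 h2
  have hV0 : V 0 = f' 0 := by simp [hV]
  have hVle : ∀ t ∈ Icc (0 : ℝ) T, V t ≤ 0 := by
    intro t ht
    have := hVanti (left_mem_Icc.2 hT0.le) ht ht.1
    rw [hV0] at this
    linarith
  -- the function u = w / cos
  set u : ℝ → ℝ := fun t => (f t - (c * Real.cos t - l)) / Real.cos t with hu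
  have huderiv : ∀ t ∈ Icc (0 : ℝ) T,
      HasDerivWithinAt u (V t / Real.cos t ^ 2) (Icc 0 T) t := by
    intro t ht
    have h1 := (hf1 t (hsub ht)).mono hsub
    have hcs : HasDerivWithinAt Real.cos (-Real.sin t) (Icc 0 T) t :=
      (Real.hasDerivAt_cos t).hasDerivWithinAt
    have hne : Real.cos t ≠ 0 := (hcosp t ht).ne'
    have := (h1.sub ((hcs.const_mul c).sub_const l)).div hcs hne
    refine this.congr_deriv ?_
    simp only [hV, Pi.sub_apply]
    ring
  have huanti : AntitoneOn u (Icc 0 T) := by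
    apply antitoneOn_of_hasDerivWithinAt_nonpos (convex_Icc 0 T)
    · exact fun t ht => (huderiv t ht).continuousWithinAt
    · intro x hx
      exact (huderiv x (interior_subset hx)).mono interior_subset
    · intro x hx
      rw [interior_Icc] at hx
      have hxI : x ∈ Icc (0 : ℝ) T := Ioo_subset_Icc_self hx
      exact div_nonpos_of_nonpos_of_nonneg (hVle x hxI) (sq_nonneg _)
  -- tan(r₀/2) = c - l
  have htan : Real.tan (r₀ / 2) = c - l := by
    have hch : 0 < Real.cos (r₀ / 2) :=
      Real.cos_pos_of_mem_Ioo ⟨by linarith, by linarith⟩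
    have hs2 : Real.sin r₀ = 2 * Real.sin (r₀ / 2) * Real.cos (r₀ / 2) := by
      have := Real.sin_two_mul (r₀ / 2)
      rwa [show 2 * (r₀ / 2) = r₀ by ring] at this
    have hc2 : Real.cos r₀ = 1 - 2 * Real.sin (r₀ / 2) ^ 2 := by
      have h1 := Real.cos_two_mul' (r₀ / 2)
      rw [show 2 * (r₀ / 2) = r₀ by ring] at h1
      have h2 := Real.sin_sq_add_cos_sq (r₀ / 2)
      linarith
    rw [Real.tan_eq_sin_div_cos, hc, hl]
    field_simp
    rw [hs2, hc2]
    ring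
  have hu0 : u 0 = f 0 - (c - l) := by simp [hu]
  have huT : u T ≤ 0 := by
    have := huanti (left_mem_Icc.2 hT0.le) (right_mem_Icc.2 hT0.le) hT0.le
    rw [hu0] at this
    have : u T ≤ f 0 - (c - l) := this
    rw [← htan] at this
    linarith
  have hcosT : 0 < Real.cos T := hcosp T (right_mem_Icc.2 hT0.le)
  have hfT : f T ≤ c * Real.cos T - l := by
    have := huT
    rw [hu, div_nonpos_iff] at this
    rcases this with ⟨h1, _⟩ | ⟨_, h2⟩
    · linarith
    · linarith
  have hcoslt : Real.cos T < Real.cos r₀ :=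
    Real.cos_lt_cos_of_nonneg_of_le_pi hr₀.le (by linarith) hr₀T
  have hfTpos : 0 ≤ f T := hpos T (hsub (right_mem_Icc.2 hT0.le))
  have hkey : c * Real.cos T - l = (Real.cos T - Real.cos r₀) / Real.sin r₀ := by
    rw [hc, hl]
    field_simp
  have : c * Real.cos T - l < 0 := by
    rw [hkey]
    exact div_neg_of_neg_of_pos (by linarith) hsin
  linarith
end

section
/- Let r₀ > 0 and b ≥ 0, and let f : ℝ → ℝ be twice continuously differentiable on [0,b] with: f(t) ≥ 0 for all t ∈ [0,b]; f''(t) − f(t) ≤ −coth r₀ for all t ∈ [0,b] (where coth x = cosh x / sinh x); f(0) ≤ tanh(r₀/2); and f'(0) ≤ 0. Then b ≤ r₀. -/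
open Set Real

/-- If a function has nonpositive derivative (within `Icc a b`) everywhere on `Icc a b`,
it is antitone on `Icc a b`. -/
lemma auxAntitoneOn_nonposDeriv {a b : ℝ} {F F' : ℝ → ℝ}
    (hF : ∀ t ∈ Icc a b, HasDerivWithinAt F (F' t) (Icc a b) t)
    (hF' : ∀ t ∈ Icc a b, F' t ≤ 0) : AntitoneOn F (Icc a b) := by
  have hmem : ∀ x ∈ Ioo a b, Icc a b ∈ nhds x := fun x hx => Icc_mem_nhds hx.1 hx.2
  apply antitoneOn_of_deriv_nonpos (convex_Icc a b)
  · exact fun t ht => (hF t ht).continuousWithinAt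
  · rw [interior_Icc]
    intro x hx
    exact (((hF x (Ioo_subset_Icc_self hx)).hasDerivAt (hmem x hx)).differentiableAt).differentiableWithinAt
  · rw [interior_Icc]
    intro x hx
    rw [((hF x (Ioo_subset_Icc_self hx)).hasDerivAt (hmem x hx)).deriv]
    exact hF' x (Ioo_subset_Icc_self hx)

/-- Curvature `k = -1` radius bound: if `f ≥ 0` and `f'' - f ≤ -coth r₀` on `[0,b]`,
`f(0) ≤ tanh (r₀/2)`, and `f'(0) ≤ 0`, where `r₀ > 0`, then `b ≤ r₀`. -/
theorem radius_bound_curvature_minus_one (r₀ : ℝ) (hr₀ : 0 < r₀)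
    (b : ℝ) (hb : 0 ≤ b)
    (f f' f'' : ℝ → ℝ)
    (hf1 : ∀ t ∈ Icc (0 : ℝ) b, HasDerivWithinAt f (f' t) (Icc 0 b) t)
    (hf2 : ∀ t ∈ Icc (0 : ℝ) b, HasDerivWithinAt f' (f'' t) (Icc 0 b) t)
    (hfc : ContinuousOn f'' (Icc 0 b))
    (hpos : ∀ t ∈ Icc (0 : ℝ) b, 0 ≤ f t)
    (hode : ∀ t ∈ Icc (0 : ℝ) b, f'' t - f t ≤ -(Real.cosh r₀ / Real.sinh r₀))
    (h0 : f 0 ≤ Real.tanh (r₀ / 2)) (h'0 : f' 0 ≤ 0) :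
    b ≤ r₀ := by
  set s : ℝ := Real.sinh r₀ with hs_def
  have hs : 0 < s := Real.sinh_pos_iff.2 hr₀
  have hch : 0 < Real.cosh (r₀ / 2) := Real.cosh_pos _
  -- tanh (r₀/2) = (cosh r₀ - 1) / sinh r₀
  have htanh : Real.tanh (r₀ / 2) = (Real.cosh r₀ - 1) / s := by
    have h1 : Real.cosh r₀ = Real.cosh (r₀ / 2) ^ 2 + Real.sinh (r₀ / 2) ^ 2 := by
      have := Real.cosh_two_mul (r₀ / 2)
      rwa [show 2 * (r₀ / 2) = r₀ by ring] at this
    have h2 : s = 2 * Real.sinh (r₀ / 2) * Real.cosh (r₀ / 2) := by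
      have := Real.sinh_two_mul (r₀ / 2)
      rw [show 2 * (r₀ / 2) = r₀ by ring] at this
      rw [hs_def, this]
    have h3 : Real.cosh (r₀ / 2) ^ 2 - Real.sinh (r₀ / 2) ^ 2 = 1 :=
      Real.cosh_sq_sub_sinh_sq _
    rw [Real.tanh_eq_sinh_div_cosh, h1, h2]
    field_simp
    nlinarith [hch]
  -- key bound on f 0
  have hf0 : f 0 + (1 - Real.cosh r₀) / s ≤ 0 := by
    rw [htanh] at h0
    have : f 0 ≤ (Real.cosh r₀ - 1) / s := h0
    have h4 : (1 - Real.cosh r₀) / s = -((Real.cosh r₀ - 1) / s) := by ring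
    linarith [this, h4.le]
  -- First auxiliary function P
  set A : ℝ → ℝ := fun t => f' t + f t + (Real.sinh t + Real.cosh t - Real.cosh r₀) / s with hA_def
  set P : ℝ → ℝ := fun t => A t * Real.exp (-t) with hP_def
  have hAderiv : ∀ t ∈ Icc (0 : ℝ) b,
      HasDerivWithinAt A (f'' t + f' t + (Real.cosh t + Real.sinh t) / s) (Icc 0 b) t := by
    intro t ht
    have h1 := (hf2 t ht).add (hf1 t ht)
    have h2 : HasDerivWithinAt (fun t => (Real.sinh t + Real.cosh t - Real.cosh r₀) / s)
        ((Real.cosh t + Real.sinh t) / s) (Icc 0 b) t :=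
      ((((Real.hasDerivAt_sinh t).add (Real.hasDerivAt_cosh t)).sub_const _).div_const s).hasDerivWithinAt
    exact h1.add h2
  have hEderiv : ∀ t : ℝ, HasDerivAt (fun t => Real.exp (-t)) (-Real.exp (-t)) t := by
    intro t
    have := ((hasDerivAt_id t).neg).exp
    simpa using this
  have hPderiv : ∀ t ∈ Icc (0 : ℝ) b,
      HasDerivWithinAt P ((f'' t - f t + Real.cosh r₀ / s) * Real.exp (-t)) (Icc 0 b) t := by
    intro t ht
    have : HasDerivWithinAt P _ (Icc 0 b) t := (hAderiv t ht).mul (hEderiv t).hasDerivWithinAt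
    convert this using 1
    simp only [hA_def]
    ring
  have hPanti : AntitoneOn P (Icc 0 b) := by
    apply auxAntitoneOn_nonposDeriv hPderiv
    intro t ht
    have h1 := hode t ht
    have h2 : f'' t - f t + Real.cosh r₀ / s ≤ 0 := by
      have : -(Real.cosh r₀ / Real.sinh r₀) = -(Real.cosh r₀ / s) := by rw [hs_def]
      linarith [h1, this.le]
    exact mul_nonpos_of_nonpos_of_nonneg h2 (Real.exp_nonneg _)
  have hP0 : P 0 ≤ 0 := by
    simp only [hP_def, hA_def, Real.sinh_zero, Real.cosh_zero, neg_zero, Real.exp_zero, mul_one]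
    have : (0 + 1 - Real.cosh r₀) / s = (1 - Real.cosh r₀) / s := by norm_num
    rw [this]
    linarith [hf0, h'0]
  have hPle : ∀ t ∈ Icc (0 : ℝ) b, A t ≤ 0 := by
    intro t ht
    have h1 : P t ≤ P 0 := hPanti (left_mem_Icc.2 hb) ht ht.1
    have h2 : P t ≤ 0 := h1.trans hP0
    have h3 : 0 < Real.exp (-t) := Real.exp_pos _
    by_contra hcon
    push_neg at hcon
    have : 0 < P t := mul_pos hcon h3
    linarith
  -- Second auxiliary function Q
  set Q : ℝ → ℝ := fun t => (f t + (Real.cosh t - Real.cosh r₀) / s) * Real.exp t with hQ_def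
  have hQderiv : ∀ t ∈ Icc (0 : ℝ) b,
      HasDerivWithinAt Q (A t * Real.exp t) (Icc 0 b) t := by
    intro t ht
    have h1 : HasDerivWithinAt (fun t => f t + (Real.cosh t - Real.cosh r₀) / s)
        (f' t + Real.sinh t / s) (Icc 0 b) t :=
      (hf1 t ht).add ((((Real.hasDerivAt_cosh t).sub_const _).div_const s).hasDerivWithinAt)
    have : HasDerivWithinAt Q _ (Icc 0 b) t := h1.mul (Real.hasDerivAt_exp t).hasDerivWithinAt
    convert this using 1
    simp only [hA_def]
    ring
  have hQanti : AntitoneOn Q (Icc 0 b) := by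
    apply auxAntitoneOn_nonposDeriv hQderiv
    intro t ht
    exact mul_nonpos_of_nonpos_of_nonneg (hPle t ht) (Real.exp_nonneg _)
  have hQ0 : Q 0 ≤ 0 := by
    simp only [hQ_def, Real.cosh_zero, Real.exp_zero, mul_one]
    have : (1 - Real.cosh r₀) / s = (1 - Real.cosh r₀) / s := rfl
    linarith [hf0]
  have hQb : Q b ≤ 0 := (hQanti (left_mem_Icc.2 hb) (right_mem_Icc.2 hb) hb).trans hQ0
  -- conclude
  have hbIcc : b ∈ Icc (0 : ℝ) b := right_mem_Icc.2 hb
  have hfb : 0 ≤ f b := hpos b hbIcc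
  have hexpb : 0 < Real.exp b := Real.exp_pos _
  have h5 : f b + (Real.cosh b - Real.cosh r₀) / s ≤ 0 := by
    by_contra hcon
    push_neg at hcon
    have : 0 < Q b := mul_pos hcon hexpb
    linarith
  have h6 : (Real.cosh b - Real.cosh r₀) / s ≤ 0 := by linarith
  have h7 : Real.cosh b ≤ Real.cosh r₀ := by
    by_contra hcon
    push_neg at hcon
    have : 0 < (Real.cosh b - Real.cosh r₀) / s := div_pos (by linarith) hs
    linarith
  have h8 : |b| ≤ |r₀| := Real.cosh_le_cosh.1 h7
  calc b ≤ |b| := le_abs_self b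
    _ ≤ |r₀| := h8
    _ = r₀ := abs_of_pos hr₀
end

section
/- Let λ₀ > 0 and b ≥ 0, and let f : ℝ → ℝ be twice continuously differentiable on [0,b] with: f(t) ≥ 0 for all t ∈ [0,b]; f''(t) ≤ −λ₀ for all t ∈ [0,b]; f(0) ≤ 1/(2λ₀); and f'(0) ≤ 0. Then b ≤ 1/λ₀. -/
open Set

/-- Curvature `k = 0` radius bound: if `f ≥ 0` and `f'' ≤ -λ₀` on `[0,b]`,
`f(0) ≤ 1/(2λ₀)`, and `f'(0) ≤ 0`, where `λ₀ > 0`, then `b ≤ 1/λ₀`. -/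
theorem radius_bound_curvature_zero (lam0 : ℝ) (hlam0 : 0 < lam0)
    (b : ℝ) (hb : 0 ≤ b)
    (f f' f'' : ℝ → ℝ)
    (hf1 : ∀ t ∈ Icc (0 : ℝ) b, HasDerivWithinAt f (f' t) (Icc 0 b) t)
    (hf2 : ∀ t ∈ Icc (0 : ℝ) b, HasDerivWithinAt f' (f'' t) (Icc 0 b) t)
    (hfc : ContinuousOn f'' (Icc 0 b))
    (hpos : ∀ t ∈ Icc (0 : ℝ) b, 0 ≤ f t)
    (hode : ∀ t ∈ Icc (0 : ℝ) b, f'' t ≤ -lam0)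
    (h0 : f 0 ≤ 1 / (2 * lam0)) (h'0 : f' 0 ≤ 0) :
    b ≤ 1 / lam0 := by
  have hint : interior (Icc (0:ℝ) b) = Ioo 0 b := interior_Icc
  have hsub : interior (Icc (0:ℝ) b) ⊆ Icc 0 b := interior_subset
  have hconv : Convex ℝ (Icc (0:ℝ) b) := convex_Icc 0 b
  have hfC : ContinuousOn f (Icc 0 b) := fun t ht => (hf1 t ht).continuousWithinAt
  have hf'C : ContinuousOn f' (Icc 0 b) := fun t ht => (hf2 t ht).continuousWithinAt
  have h0mem : (0:ℝ) ∈ Icc (0:ℝ) b := ⟨le_refl 0, hb⟩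
  have hbmem : b ∈ Icc (0:ℝ) b := ⟨hb, le_refl b⟩
  -- Step 1: t ↦ f' t + lam0 * t is antitone on [0,b]
  have step1 : AntitoneOn (fun t => f' t + lam0 * t) (Icc 0 b) := by
    apply antitoneOn_of_hasDerivWithinAt_nonpos hconv
      (hf'C.add (continuous_const.mul continuous_id).continuousOn)
      (f' := fun t => f'' t + lam0)
    · intro x hx
      have : HasDerivWithinAt (fun t => lam0 * t) lam0 (interior (Icc (0:ℝ) b)) x := by
        simpa using ((hasDerivAt_id x).const_mul lam0).hasDerivWithinAt
      exact ((hf2 x (hsub hx)).mono hsub).add this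
    · intro x hx
      have := hode x (hsub hx)
      linarith
  have key1 : ∀ t ∈ Icc (0:ℝ) b, f' t + lam0 * t ≤ f' 0 := by
    intro t ht
    have := step1 h0mem ht ht.1
    simpa using this
  -- Step 2: g t = f t + lam0 * t^2/2 - f' 0 * t is antitone on [0,b]
  have step2 : AntitoneOn (fun t => f t + lam0 * t^2 / 2 - f' 0 * t) (Icc 0 b) := by
    apply antitoneOn_of_hasDerivWithinAt_nonpos hconv
      ((hfC.add (by fun_prop)).sub (by fun_prop))
      (f' := fun t => f' t + lam0 * t - f' 0)
    · intro x hx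
      have hd : HasDerivWithinAt (fun t => lam0 * t^2 / 2) (lam0 * x)
          (interior (Icc (0:ℝ) b)) x := by
        have : HasDerivAt (fun t : ℝ => lam0 * t^2 / 2) (lam0 * (2 * x) / 2) x := by
          exact (((hasDerivAt_pow 2 x)).const_mul lam0).div_const 2 |>.congr_deriv (by ring)
        simpa [mul_comm] using (this.congr_deriv (by ring)).hasDerivWithinAt
      have hd2 : HasDerivWithinAt (fun t => f' 0 * t) (f' 0)
          (interior (Icc (0:ℝ) b)) x :=
        ((hasDerivAt_id x).const_mul (f' 0)).hasDerivWithinAt.congr_deriv (by ring)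
      exact (((hf1 x (hsub hx)).mono hsub).add hd).sub hd2
    · intro x hx
      have := key1 x (hsub hx)
      linarith
  have key2 : f b + lam0 * b^2 / 2 - f' 0 * b ≤ f 0 := by
    have := step2 h0mem hbmem hb
    simpa using this
  have hfb := hpos b hbmem
  have h1 : f' 0 * b ≤ 0 := mul_nonpos_of_nonpos_of_nonneg h'0 hb
  have h2 : lam0 * b ^ 2 ≤ 1 / lam0 := by
    have hx : lam0 * b ^ 2 / 2 ≤ 1 / (2 * lam0) := by linarith
    rw [le_div_iff₀ hlam0]
    rw [div_le_div_iff₀ two_pos (by positivity)] at hx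
    nlinarith
  have h3 : (lam0 * b) ^ 2 ≤ 1 := by
    nlinarith [mul_le_mul_of_nonneg_left h2 hlam0.le, mul_one_div_cancel hlam0.ne']
  have h4 : lam0 * b ≤ 1 := by nlinarith [mul_nonneg hlam0.le hb]
  rw [le_div_iff₀ hlam0]; linarith [mul_comm b lam0]
end
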